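/- arXiv:1705.03981 — 4 statements merged into one kernel-verified Lean document; each statement's English description precedes it below -/
import Mathlib

section
/- Let G=(V,E) be a locally finite connected graph with symmetric weights and uniformly positive measure, λ>1, and a:V→[0,∞) satisfy (A₂): a(x)→∞ as d(x,x₀)→∞ for some fixed x₀. If {u_k} is bounded in E_λ (‖u‖²_{E_λ}=∫_V(|∇u|²+(λa+1)u²)dμ) and u_k⇀u weakly in E_λ, then u_k→u strongly in L^q(V) for every 2≤q≤∞. -/
open Filter Topology Real

noncomputable section

/-- Gradient form Γ(u,v)(x) on a locally finite graph. -/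
def graphGamma {V : Type*} (nbr : V → Finset V) (w : V → V → ℝ) (mu : V → ℝ)
    (u v : V → ℝ) (x : V) : ℝ :=
  (1 / (2 * mu x)) * ∑ y ∈ nbr x, w x y * ((u y - u x) * (v y - v x))

/-- Integrand of the E_λ inner product. -/
def eInner {V : Type*} (nbr : V → Finset V) (w : V → V → ℝ) (mu a : V → ℝ)
    (lam : ℝ) (u v : V → ℝ) (x : V) : ℝ :=
  mu x * (graphGamma nbr w mu u v x + (lam * a x + 1) * (u x * v x))

section AuxLemmas

variable {V : Type*} (nbr : V → Finset V) (w : V → V → ℝ) (mu a : V → ℝ) (lam : ℝ)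

lemma eInner_eq (u v : V → ℝ) (x : V) (hmux : 0 < mu x) :
    eInner nbr w mu a lam u v x
      = (1/2) * (∑ y ∈ nbr x, w x y * ((u y - u x) * (v y - v x)))
        + mu x * ((lam * a x + 1) * (u x * v x)) := by
  have h : mu x ≠ 0 := ne_of_gt hmux
  unfold eInner graphGamma
  field_simp

lemma eInner_self_lb (u : V → ℝ) (x : V) (hw : ∀ y ∈ nbr x, 0 < w x y) (hmux : 0 < mu x) :
    mu x * ((lam * a x + 1) * (u x * u x)) ≤ eInner nbr w mu a lam u u x := by
  rw [eInner_eq nbr w mu a lam u u x hmux]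
  have hS : 0 ≤ ∑ y ∈ nbr x, w x y * ((u y - u x) * (u y - u x)) :=
    Finset.sum_nonneg fun y hy => mul_nonneg (hw y hy).le (mul_self_nonneg _)
  linarith

lemma eInner_self_nonneg (u : V → ℝ) (x : V) (hw : ∀ y ∈ nbr x, 0 < w x y) (hmux : 0 < mu x)
    (hax : 0 ≤ lam * a x + 1) :
    0 ≤ eInner nbr w mu a lam u u x :=
  le_trans (mul_nonneg hmux.le (mul_nonneg hax (mul_self_nonneg _)))
    (eInner_self_lb nbr w mu a lam u x hw hmux)

lemma eInner_sub_le (u v g : V → ℝ) (hg : ∀ y, g y = u y - v y) (x : V)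
    (hw : ∀ y ∈ nbr x, 0 < w x y) (hmux : 0 < mu x) (hax : 0 ≤ lam * a x + 1) :
    eInner nbr w mu a lam g g x
      ≤ 2 * eInner nbr w mu a lam u u x + 2 * eInner nbr w mu a lam v v x := by
  rw [eInner_eq nbr w mu a lam g g x hmux, eInner_eq nbr w mu a lam u u x hmux,
    eInner_eq nbr w mu a lam v v x hmux]
  simp only [hg]
  have hsum : ∑ y ∈ nbr x, w x y * (((u y - v y) - (u x - v x)) * ((u y - v y) - (u x - v x)))
      ≤ ∑ y ∈ nbr x, (2 * (w x y * ((u y - u x) * (u y - u x)))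
          + 2 * (w x y * ((v y - v x) * (v y - v x)))) := by
    refine Finset.sum_le_sum fun y hy => ?_
    have hwy := (hw y hy).le
    nlinarith [sq_nonneg ((u y - u x) + (v y - v x)),
      mul_nonneg hwy (sq_nonneg ((u y - u x) + (v y - v x)))]
  rw [Finset.sum_add_distrib, ← Finset.mul_sum, ← Finset.mul_sum] at hsum
  have hmu2 : 0 ≤ mu x * (lam * a x + 1) := mul_nonneg hmux.le hax
  have hq : mu x * ((lam * a x + 1) * ((u x - v x) * (u x - v x)))
      ≤ 2 * (mu x * ((lam * a x + 1) * (u x * u x)))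
        + 2 * (mu x * ((lam * a x + 1) * (v x * v x))) := by
    nlinarith [sq_nonneg (u x + v x), mul_nonneg hmu2 (sq_nonneg (u x + v x))]
  linarith

end AuxLemmas

section DeltaLemmas
open scoped Classical
variable {V : Type*} (nbr : V → Finset V) (w : V → V → ℝ) (mu a : V → ℝ) (lam : ℝ)

/-- The delta function at z. -/
def deltaFn (z : V) : V → ℝ := fun x => if x = z then 1 else 0

lemma eInner_delta_vanish (hsym : ∀ x y, y ∈ nbr x ↔ x ∈ nbr y) (z : V) (f : V → ℝ)
    (x : V) (hxz : x ≠ z) (hxn : x ∉ nbr z) :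
    eInner nbr w mu a lam f (deltaFn z) x = 0 := by
  have hδx : deltaFn z x = 0 := if_neg hxz
  have hzx : z ∉ nbr x := fun h => hxn ((hsym x z).mp h)
  have hsum : ∑ y ∈ nbr x, w x y * ((f y - f x) * (deltaFn z y - deltaFn z x)) = 0 := by
    refine Finset.sum_eq_zero fun y hy => ?_
    have hyz : y ≠ z := fun h => hzx (h ▸ hy)
    have : deltaFn z y = 0 := if_neg hyz
    rw [this, hδx]
    ring
  unfold eInner graphGamma
  rw [hsum, hδx]
  ring

lemma summable_eInner_delta (hsym : ∀ x y, y ∈ nbr x ↔ x ∈ nbr y) (z : V) (f : V → ℝ) :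
    Summable (fun x => eInner nbr w mu a lam f (deltaFn z) x) := by
  refine summable_of_ne_finset_zero (s := insert z (nbr z)) fun x hx => ?_
  simp only [Finset.mem_insert, not_or] at hx
  exact eInner_delta_vanish nbr w mu a lam hsym z f x hx.1 hx.2

lemma eInner_delta_tsum (hsym : ∀ x y, y ∈ nbr x ↔ x ∈ nbr y)
    (hwsym : ∀ x y, w x y = w y x)
    (hmupos : ∀ x, 0 < mu x) (z : V) (f : V → ℝ) :
    (∑' x, eInner nbr w mu a lam f (deltaFn z) x)
      = (∑ y ∈ nbr z, w z y * (f z - f y)) + mu z * ((lam * a z + 1) * f z) := by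
  rw [tsum_eq_sum (s := insert z ((nbr z).erase z)) (fun x hx => by
    simp only [Finset.mem_insert, Finset.mem_erase, not_or, not_and_or, not_not] at hx
    obtain ⟨hxz, hx2⟩ := hx
    rcases hx2 with h | h
    · exact absurd h hxz
    · exact eInner_delta_vanish nbr w mu a lam hsym z f x hxz h)]
  rw [Finset.sum_insert (Finset.notMem_erase _ _)]
  have hmz : mu z ≠ 0 := ne_of_gt (hmupos z)
  have hz : eInner nbr w mu a lam f (deltaFn z) z
      = (1/2) * (∑ y ∈ nbr z, w z y * (f z - f y)) + mu z * ((lam * a z + 1) * f z) := by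
    have hδz : deltaFn z z = 1 := if_pos rfl
    have h1 : ∑ y ∈ nbr z, w z y * ((f y - f z) * (deltaFn z y - deltaFn z z))
        = ∑ y ∈ nbr z, w z y * (f z - f y) := by
      refine Finset.sum_congr rfl fun y hy => ?_
      by_cases h : y = z
      · subst h; simp
      · have : deltaFn z y = 0 := if_neg h
        rw [this, hδz]; ring
    unfold eInner graphGamma
    rw [h1, hδz]
    field_simp
  have herase : ∀ x ∈ (nbr z).erase z,
      eInner nbr w mu a lam f (deltaFn z) x = (1/2) * (w z x * (f z - f x)) := by
    intro x hx
    obtain ⟨hxz, hxn⟩ := Finset.mem_erase.mp hx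
    have hzx : z ∈ nbr x := (hsym x z).mpr hxn
    have hδx : deltaFn z x = 0 := if_neg hxz
    have h2 : ∑ y ∈ nbr x, w x y * ((f y - f x) * (deltaFn z y - deltaFn z x))
        = w x z * (f z - f x) := by
      rw [Finset.sum_congr rfl (fun y hy => ?_), Finset.sum_ite_eq' (nbr x) z
        (fun _ => w x z * (f z - f x)), if_pos hzx]
      by_cases h : y = z
      · subst h
        have : deltaFn y y = 1 := if_pos rfl
        rw [if_pos rfl, this, hδx]; ring
      · have : deltaFn z y = 0 := if_neg h
        rw [if_neg h, this, hδx]; ring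
    unfold eInner graphGamma
    rw [h2, hδx]
    have hmx : mu x ≠ 0 := ne_of_gt (hmupos x)
    rw [hwsym x z]
    field_simp
    ring
  rw [Finset.sum_congr rfl herase]
  rw [Finset.sum_erase _ (by simp)]
  rw [hz, ← Finset.mul_sum]
  ring

end DeltaLemmas

section MaxPrinciple
variable {V : Type*} (nbr : V → Finset V) (w : V → V → ℝ) (mu a : V → ℝ) (lam : ℝ)

lemma max_principle (hwpos : ∀ x y, y ∈ nbr x → 0 < w x y)
    (hmupos : ∀ x, 0 < mu x) (ha0 : ∀ x, 0 ≤ a x) (hlam : 1 < lam)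
    (h : V → ℝ) (hfin : ∀ ε : ℝ, 0 < ε → {x | ε ≤ |h x|}.Finite)
    (heq : ∀ z, (∑ y ∈ nbr z, w z y * (h z - h y)) + mu z * ((lam * a z + 1) * h z) = 0) :
    ∀ z, h z = 0 := by
  by_contra hcon
  push_neg at hcon
  obtain ⟨z₀, hz₀⟩ := hcon
  have hz₀' : 0 < |h z₀| := abs_pos.mpr hz₀
  have hTfin := hfin _ hz₀'
  set T := hTfin.toFinset with hT
  have hz₀T : z₀ ∈ T := by
    rw [hT, Set.Finite.mem_toFinset]; exact Set.mem_setOf.mpr le_rfl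
  obtain ⟨z, hzT, hzmax⟩ := T.exists_max_image (fun x => |h x|) ⟨z₀, hz₀T⟩
  have hzmem : |h z₀| ≤ |h z| := by
    have := Set.Finite.mem_toFinset hTfin |>.mp hzT
    exact this
  have hglobal : ∀ x, |h x| ≤ |h z| := by
    intro x
    by_cases hx : x ∈ T
    · exact hzmax x hx
    · have : ¬ (|h z₀| ≤ |h x|) := by
        rw [hT, Set.Finite.mem_toFinset] at hx; exact hx
      exact (not_le.mp this).le.trans hzmem
  have hzpos : 0 < |h z| := lt_of_lt_of_le hz₀' hzmem
  have hzne : h z ≠ 0 := abs_pos.mp hzpos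
  have hsum0 : 0 ≤ ∑ y ∈ nbr z, w z y * (h z * (h z - h y)) := by
    refine Finset.sum_nonneg fun y hy => mul_nonneg (hwpos z y hy).le ?_
    have h1 : h z * h y ≤ |h z| * |h y| := (le_abs_self _).trans_eq (abs_mul _ _)
    nlinarith [hglobal y, abs_nonneg (h y), sq_abs (h z)]
  have hterm : 0 < mu z * ((lam * a z + 1) * (h z * h z)) := by
    have h1 : 0 < lam * a z + 1 := by nlinarith [ha0 z]
    exact mul_pos (hmupos z) (mul_pos h1 (mul_self_pos.mpr hzne))
  have hkey : (∑ y ∈ nbr z, w z y * (h z * (h z - h y))) + mu z * ((lam * a z + 1) * (h z * h z))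
      = h z * ((∑ y ∈ nbr z, w z y * (h z - h y)) + mu z * ((lam * a z + 1) * h z)) := by
    rw [mul_add, Finset.mul_sum]
    have : ∀ y ∈ nbr z, w z y * (h z * (h z - h y)) = h z * (w z y * (h z - h y)) :=
      fun y _ => by ring
    rw [Finset.sum_congr rfl this]
    ring
  rw [heq z, mul_zero] at hkey
  linarith

end MaxPrinciple

/-- Compactness: if {u_k} is bounded in E_λ and u_k ⇀ u weakly in E_λ, then
u_k → u strongly in L^q(V) for every 2 ≤ q ≤ ∞ (the L^∞ case is the last
conjunct). -/
theorem Elambda_compact_embedding {V : Type*}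
    (nbr : V → Finset V) (w : V → V → ℝ) (mu a : V → ℝ)
    (hsym : ∀ x y, y ∈ nbr x ↔ x ∈ nbr y)
    (hconn : ∀ x y : V, Relation.ReflTransGen (fun s t => t ∈ nbr s) x y)
    (hwpos : ∀ x y, y ∈ nbr x → 0 < w x y)
    (hwsym : ∀ x y, w x y = w y x)
    (mumin : ℝ) (hmin : 0 < mumin) (hmu : ∀ x, mumin ≤ mu x)
    (x₀ : V) (d : V → ℕ)
    (hballs : ∀ R : ℕ, {x : V | d x ≤ R}.Finite)
    (ha0 : ∀ x, 0 ≤ a x)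
    (hainf : ∀ C : ℝ, ∃ R : ℕ, ∀ x, R < d x → C ≤ a x)
    (lam : ℝ) (hlam : 1 < lam)
    (u : ℕ → V → ℝ) (u₀ : V → ℝ)
    (hmem : ∀ k, Summable (eInner nbr w mu a lam (u k) (u k)))
    (hmem0 : Summable (eInner nbr w mu a lam u₀ u₀))
    (hbdd : ∃ C : ℝ, ∀ k, ∑' x, eInner nbr w mu a lam (u k) (u k) x ≤ C)
    (hweak : ∀ v : V → ℝ, Summable (eInner nbr w mu a lam v v) →
      Tendsto (fun k => ∑' x, eInner nbr w mu a lam (u k) v x) atTop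
        (𝓝 (∑' x, eInner nbr w mu a lam u₀ v x))) :
    (∀ q : ℝ, 2 ≤ q →
        Tendsto (fun k => ∑' x, mu x * |u k x - u₀ x| ^ q) atTop (𝓝 0)) ∧
    Tendsto (fun k => ⨆ x, |u k x - u₀ x|) atTop (𝓝 0) := by
  classical
  rcases isEmpty_or_nonempty V with hV | hV
  · have hts : ∀ (f : V → ℝ), (∑' x, f x) = 0 := fun f => by
      rw [tsum_eq_sum (s := (∅ : Finset V)) (fun b _ => (IsEmpty.false b).elim)]
      simp
    constructor
    · intro q hq
      simp only [hts]
      exact tendsto_const_nhds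
    · have h2 : ∀ k, (⨆ x, |u k x - u₀ x|) = 0 := fun k => Real.iSup_of_isEmpty _
      simp only [h2]
      exact tendsto_const_nhds
  have hcountS : (Set.univ : Set V).Countable := by
    have huniv : (Set.univ : Set V) = ⋃ n : ℕ, {x | d x ≤ n} := by
      ext x
      simp only [Set.mem_univ, Set.mem_iUnion, Set.mem_setOf_eq, true_iff]
      exact ⟨d x, le_rfl⟩
    rw [huniv]
    exact Set.countable_iUnion fun n => (hballs n).countable
  haveI : Countable V := Set.countable_univ_iff.mp hcountS
  obtain ⟨C, hC⟩ := hbdd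
  have hmupos : ∀ x, 0 < mu x := fun x => lt_of_lt_of_le hmin (hmu x)
  have hax : ∀ x, 0 ≤ lam * a x + 1 := fun x => by nlinarith [ha0 x]
  have hwx : ∀ x : V, ∀ y ∈ nbr x, 0 < w x y := fun x y hy => hwpos x y hy
  have hNn : ∀ (f : V → ℝ) (x : V), 0 ≤ eInner nbr w mu a lam f f x := fun f x =>
    eInner_self_nonneg nbr w mu a lam f x (hwx x) (hmupos x) (hax x)
  have hlb : ∀ (f : V → ℝ) (x : V),
      mu x * ((lam * a x + 1) * (f x * f x)) ≤ eInner nbr w mu a lam f f x :=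
    fun f x => eInner_self_lb nbr w mu a lam f x (hwx x) (hmupos x)
  have hlb3 : ∀ (f : V → ℝ) (x : V), mu x * (f x)^2 ≤ eInner nbr w mu a lam f f x := by
    intro f x
    have h0 : 0 ≤ mu x * ((lam * a x) * (f x * f x)) :=
      mul_nonneg (hmupos x).le (mul_nonneg (mul_nonneg (by linarith) (ha0 x)) (mul_self_nonneg _))
    nlinarith [hlb f x]
  have hlb2 : ∀ (f : V → ℝ) (x : V), mumin * (f x)^2 ≤ eInner nbr w mu a lam f f x :=
    fun f x => le_trans (mul_le_mul_of_nonneg_right (hmu x) (sq_nonneg _)) (hlb3 f x)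
  have hC0 : 0 ≤ C := le_trans (tsum_nonneg (fun x => hNn (u 0) x)) (hC 0)
  set M := Real.sqrt (C / mumin) with hM
  have hMb : ∀ k x, u k x ∈ Set.Icc (-M) M := by
    intro k x
    have h1 : mumin * (u k x)^2 ≤ C :=
      le_trans (le_trans (hlb2 (u k) x) (Summable.le_tsum (hmem k) x fun j _ => hNn (u k) j)) (hC k)
    have h2 : (u k x)^2 ≤ C / mumin := (le_div_iff₀ hmin).mpr (by nlinarith)
    have h3 : |u k x| ≤ M := by
      rw [hM, ← Real.sqrt_sq_eq_abs]
      exact Real.sqrt_le_sqrt h2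
    exact ⟨neg_le_of_abs_le h3, le_of_abs_le h3⟩
  -- pointwise convergence
  have hptwise : ∀ z, Tendsto (fun k => u k z) atTop (𝓝 (u₀ z)) := by
    intro z
    apply tendsto_of_subseq_tendsto
    intro ns hns
    have hK : IsCompact (Set.pi Set.univ (fun _ : V => Set.Icc (-M) M)) :=
      isCompact_univ_pi fun _ => isCompact_Icc
    have hmemK : ∀ n, (u (ns n)) ∈ Set.pi Set.univ (fun _ : V => Set.Icc (-M) M) :=
      fun n x _ => hMb (ns n) x
    obtain ⟨g, hgK, φ, hφ, hconvp⟩ := hK.tendsto_subseq hmemK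
    have hconv : ∀ x, Tendsto (fun n => u (ns (φ n)) x) atTop (𝓝 (g x)) := by
      rw [tendsto_pi_nhds] at hconvp
      intro x
      exact hconvp x
    have hnsφ : Tendsto (fun n => ns (φ n)) atTop atTop := hns.comp hφ.tendsto_atTop
    have hgL : ∀ z', ((∑ y ∈ nbr z', w z' y * (g z' - g y)) + mu z' * ((lam * a z' + 1) * g z'))
        = ((∑ y ∈ nbr z', w z' y * (u₀ z' - u₀ y)) + mu z' * ((lam * a z' + 1) * u₀ z')) := by
      intro z'
      have heq1 : ∀ f : V → ℝ, (∑' x, eInner nbr w mu a lam f (deltaFn z') x)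
          = (∑ y ∈ nbr z', w z' y * (f z' - f y)) + mu z' * ((lam * a z' + 1) * f z') :=
        fun f => eInner_delta_tsum nbr w mu a lam hsym hwsym hmupos z' f
      have h1 := (hweak (deltaFn z') (summable_eInner_delta nbr w mu a lam hsym z'
        (deltaFn z'))).comp hnsφ
      have h1' : Tendsto (fun n => (∑ y ∈ nbr z', w z' y * (u (ns (φ n)) z' - u (ns (φ n)) y))
          + mu z' * ((lam * a z' + 1) * u (ns (φ n)) z')) atTop
          (𝓝 ((∑ y ∈ nbr z', w z' y * (u₀ z' - u₀ y)) + mu z' * ((lam * a z' + 1) * u₀ z'))) := by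
        simp only [Function.comp_def, heq1] at h1
        exact h1
      have h2 : Tendsto (fun n => (∑ y ∈ nbr z', w z' y * (u (ns (φ n)) z' - u (ns (φ n)) y))
          + mu z' * ((lam * a z' + 1) * u (ns (φ n)) z')) atTop
          (𝓝 ((∑ y ∈ nbr z', w z' y * (g z' - g y)) + mu z' * ((lam * a z' + 1) * g z'))) := by
        refine Tendsto.add ?_ ?_
        · exact tendsto_finset_sum _ fun y _ => ((hconv z').sub (hconv y)).const_mul _
        · exact ((hconv z').const_mul _).const_mul _
      exact tendsto_nhds_unique h2 h1'
    have hgsum : Summable (fun x => mumin * (g x)^2) := by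
      refine summable_of_sum_le (c := C) (fun x => mul_nonneg hmin.le (sq_nonneg _)) fun s => ?_
      have hlim : Tendsto (fun n => ∑ x ∈ s, mumin * (u (ns (φ n)) x)^2) atTop
          (𝓝 (∑ x ∈ s, mumin * (g x)^2)) :=
        tendsto_finset_sum _ fun x _ => ((hconv x).pow 2).const_mul _
      refine le_of_tendsto' hlim fun n => ?_
      calc ∑ x ∈ s, mumin * (u (ns (φ n)) x)^2
          ≤ ∑ x ∈ s, eInner nbr w mu a lam (u (ns (φ n))) (u (ns (φ n))) x :=
            Finset.sum_le_sum fun x _ => hlb2 _ x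
        _ ≤ ∑' x, eInner nbr w mu a lam (u (ns (φ n))) (u (ns (φ n))) x :=
            Summable.sum_le_tsum s (fun x _ => hNn _ x) (hmem _)
        _ ≤ C := hC _
    have h0sum : Summable (fun x => mumin * (u₀ x)^2) :=
      Summable.of_nonneg_of_le (fun x => mul_nonneg hmin.le (sq_nonneg _))
        (fun x => hlb2 u₀ x) hmem0
    have hdiffsum : Summable (fun x => (g x - u₀ x)^2) := by
      have hb : ∀ x, (g x - u₀ x)^2 ≤ (2/mumin) * (mumin * (g x)^2 + mumin * (u₀ x)^2) := by
        intro x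
        have h1 : (g x - u₀ x)^2 ≤ 2*(g x)^2 + 2*(u₀ x)^2 := by
          nlinarith [sq_nonneg (g x + u₀ x)]
        have h2 : (2/mumin) * (mumin * (g x)^2 + mumin * (u₀ x)^2)
            = 2*(g x)^2 + 2*(u₀ x)^2 := by
          field_simp
        linarith
      exact Summable.of_nonneg_of_le (fun x => sq_nonneg _) hb ((hgsum.add h0sum).mul_left _)
    have hfin : ∀ ε : ℝ, 0 < ε → {x | ε ≤ |g x - u₀ x|}.Finite := by
      intro ε hε
      have h2 : ∀ᶠ x in Filter.cofinite, (g x - u₀ x)^2 < ε^2 :=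
        hdiffsum.tendsto_cofinite_zero (Iio_mem_nhds (by positivity))
      have h3 : {x | ¬ ((g x - u₀ x)^2 < ε^2)}.Finite := Filter.eventually_cofinite.mp h2
      refine h3.subset fun x hx => ?_
      simp only [Set.mem_setOf_eq, not_lt]
      calc ε^2 ≤ |g x - u₀ x|^2 := pow_le_pow_left₀ hε.le hx 2
        _ = (g x - u₀ x)^2 := sq_abs _
    have heqh : ∀ z', (∑ y ∈ nbr z', w z' y * ((g z' - u₀ z') - (g y - u₀ y)))
        + mu z' * ((lam * a z' + 1) * (g z' - u₀ z')) = 0 := by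
      intro z'
      have hf := hgL z'
      have hs : ∑ y ∈ nbr z', w z' y * ((g z' - u₀ z') - (g y - u₀ y))
          = (∑ y ∈ nbr z', w z' y * (g z' - g y)) - ∑ y ∈ nbr z', w z' y * (u₀ z' - u₀ y) := by
        rw [← Finset.sum_sub_distrib]
        exact Finset.sum_congr rfl fun y _ => by ring
      rw [hs]
      linear_combination hf
    have hzero : ∀ x, g x - u₀ x = 0 :=
      max_principle nbr w mu a lam hwpos hmupos ha0 hlam (fun x => g x - u₀ x) hfin heqh
    refine ⟨φ, ?_⟩
    have hgz : g z = u₀ z := by have := hzero z; linarith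
    exact hgz ▸ hconv z
  -- strong convergence
  have hvsum : ∀ k, Summable (fun x => eInner nbr w mu a lam
      (fun y => u k y - u₀ y) (fun y => u k y - u₀ y) x) := by
    intro k
    refine Summable.of_nonneg_of_le (fun x => hNn _ x) (fun x => ?_)
      (((hmem k).mul_left 2).add (hmem0.mul_left 2))
    exact eInner_sub_le nbr w mu a lam (u k) u₀ _ (fun y => rfl) x (hwx x) (hmupos x) (hax x)
  set D := 2*C + 2*(∑' x, eInner nbr w mu a lam u₀ u₀ x) with hD
  have hDb : ∀ k, (∑' x, eInner nbr w mu a lam (fun y => u k y - u₀ y)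
      (fun y => u k y - u₀ y) x) ≤ D := by
    intro k
    calc (∑' x, eInner nbr w mu a lam (fun y => u k y - u₀ y) (fun y => u k y - u₀ y) x)
        ≤ ∑' x, (2 * eInner nbr w mu a lam (u k) (u k) x
            + 2 * eInner nbr w mu a lam u₀ u₀ x) :=
          Summable.tsum_le_tsum (fun x => eInner_sub_le nbr w mu a lam (u k) u₀ _ (fun y => rfl) x
            (hwx x) (hmupos x) (hax x)) (hvsum k)
            (((hmem k).mul_left 2).add (hmem0.mul_left 2))
      _ = 2*(∑' x, eInner nbr w mu a lam (u k) (u k) x)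
            + 2*(∑' x, eInner nbr w mu a lam u₀ u₀ x) := by
          rw [Summable.tsum_add ((hmem k).mul_left 2) (hmem0.mul_left 2), tsum_mul_left, tsum_mul_left]
      _ ≤ D := by have := hC k; rw [hD]; linarith
  have hD0 : 0 ≤ D := by
    have h1 : 0 ≤ ∑' x, eInner nbr w mu a lam u₀ u₀ x := tsum_nonneg (fun x => hNn u₀ x)
    rw [hD]; linarith
  have hμv2 : ∀ k, Summable (fun x => mu x * (u k x - u₀ x)^2) := fun k =>
    Summable.of_nonneg_of_le (fun x => mul_nonneg (hmupos x).le (sq_nonneg _))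
      (fun x => hlb3 (fun y => u k y - u₀ y) x) (hvsum k)
  set S : ℕ → ℝ := fun k => ∑' x, mu x * (u k x - u₀ x)^2 with hSdef
  have hSnn : ∀ k, 0 ≤ S k := fun k => tsum_nonneg fun x =>
    mul_nonneg (hmupos x).le (sq_nonneg _)
  have hSD : ∀ k, S k ≤ D := fun k =>
    le_trans (Summable.tsum_le_tsum (fun x => hlb3 (fun y => u k y - u₀ y) x) (hμv2 k) (hvsum k)) (hDb k)
  have hS0 : Tendsto S atTop (𝓝 0) := by
    rw [Metric.tendsto_atTop]
    intro ε hε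
    set A := 2*D/(lam*ε) + 1 with hA
    have hlamε : 0 < lam * ε := by nlinarith
    have hA1 : (1:ℝ) ≤ A := by
      rw [hA]
      have : 0 ≤ 2*D/(lam*ε) := div_nonneg (by linarith) hlamε.le
      linarith
    obtain ⟨R, hR⟩ := hainf A
    set F := (hballs R).toFinset with hF
    have hlamA : 0 < lam * A := by nlinarith
    have hterm' : ∀ x : V, x ∉ F → ∀ k, mu x * (u k x - u₀ x)^2
        ≤ (1/(lam*A)) * eInner nbr w mu a lam (fun y => u k y - u₀ y)
          (fun y => u k y - u₀ y) x := by
      intro x hx k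
      have hdx : R < d x := by
        by_contra hc
        exact hx (by rw [hF, Set.Finite.mem_toFinset]; exact Set.mem_setOf.mpr (not_lt.mp hc))
      have haA : A ≤ a x := hR x hdx
      have h1 := hlb (fun y => u k y - u₀ y) x
      have h2 : lam * A ≤ lam * a x + 1 := by nlinarith
      have h3 : lam*A * (mu x * (u k x - u₀ x)^2)
          ≤ eInner nbr w mu a lam (fun y => u k y - u₀ y) (fun y => u k y - u₀ y) x := by
        have h4 : 0 ≤ mu x * (u k x - u₀ x)^2 :=
          mul_nonneg (hmupos x).le (sq_nonneg _)
        nlinarith [h1]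
      rw [one_div_mul_eq_div, le_div_iff₀ hlamA]
      nlinarith [h3]
    have htail : ∀ k, (∑' x : {x // x ∉ F}, mu ↑x * (u k ↑x - u₀ ↑x)^2) ≤ ε/2 := by
      intro k
      have hAe : lam * A * ε = 2*D + lam*ε := by
        rw [hA]; field_simp
      calc (∑' x : {x // x ∉ F}, mu ↑x * (u k ↑x - u₀ ↑x)^2)
          ≤ ∑' x : {x // x ∉ F}, (1/(lam*A)) * eInner nbr w mu a lam
              (fun y => u k y - u₀ y) (fun y => u k y - u₀ y) ↑x :=
            Summable.tsum_le_tsum (fun x => hterm' ↑x x.2 k) ((hμv2 k).subtype _)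
              (((hvsum k).subtype _).mul_left _)
        _ = (1/(lam*A)) * ∑' x : {x // x ∉ F}, eInner nbr w mu a lam
              (fun y => u k y - u₀ y) (fun y => u k y - u₀ y) ↑x := tsum_mul_left
        _ ≤ (1/(lam*A)) * D := by
            refine mul_le_mul_of_nonneg_left ?_ (by positivity)
            exact le_trans (Summable.tsum_subtype_le _ _ (fun x => hNn _ x) (hvsum k)) (hDb k)
        _ ≤ ε/2 := by
            rw [one_div_mul_eq_div, div_le_div_iff₀ hlamA two_pos]
            nlinarith
    have hhead : Tendsto (fun k => ∑ x ∈ F, mu x * (u k x - u₀ x)^2) atTop (𝓝 0) := by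
      have h1 : Tendsto (fun k => ∑ x ∈ F, mu x * (u k x - u₀ x)^2) atTop
          (𝓝 (∑ x ∈ F, mu x * (u₀ x - u₀ x)^2)) :=
        tendsto_finset_sum _ fun x _ =>
          (((hptwise x).sub tendsto_const_nhds).pow 2).const_mul _
      simpa using h1
    obtain ⟨K, hK2⟩ := (Metric.tendsto_atTop.mp hhead) (ε/2) (by linarith)
    refine ⟨K, fun k hk => ?_⟩
    have hsplit := Summable.sum_add_tsum_subtype_compl (hμv2 k) F
    have hd := hK2 k hk
    rw [Real.dist_eq, sub_zero] at hd ⊢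
    have h1 : ∑ x ∈ F, mu x * (u k x - u₀ x)^2 < ε/2 := lt_of_abs_lt hd
    have h2 := htail k
    rw [abs_of_nonneg (hSnn k)]
    have hSk : S k = ∑' x, mu x * (u k x - u₀ x)^2 := rfl
    linarith [hsplit, hSk]
  have hpb : ∀ k x, |u k x - u₀ x| ≤ Real.sqrt (S k / mumin) := by
    intro k x
    have h1 : mumin * (u k x - u₀ x)^2 ≤ mu x * (u k x - u₀ x)^2 :=
      mul_le_mul_of_nonneg_right (hmu x) (sq_nonneg _)
    have h2 : mu x * (u k x - u₀ x)^2 ≤ S k :=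
      Summable.le_tsum (hμv2 k) x fun j _ => mul_nonneg (hmupos j).le (sq_nonneg _)
    have h3 : (u k x - u₀ x)^2 ≤ S k / mumin := (le_div_iff₀ hmin).mpr (by nlinarith)
    rw [← Real.sqrt_sq_eq_abs]
    exact Real.sqrt_le_sqrt h3
  have hsup_le : ∀ k, (⨆ x, |u k x - u₀ x|) ≤ Real.sqrt (S k / mumin) :=
    fun k => Real.iSup_le (fun x => hpb k x) (Real.sqrt_nonneg _)
  have hsup_nn : ∀ k, 0 ≤ ⨆ x, |u k x - u₀ x| := by
    intro k
    obtain ⟨x⟩ := hV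
    refine le_trans (abs_nonneg (u k x - u₀ x)) (le_ciSup (f := fun x => |u k x - u₀ x|) ?_ x)
    exact ⟨Real.sqrt (S k / mumin), by rintro _ ⟨y, rfl⟩; exact hpb k y⟩
  have hsqrt : Tendsto (fun k => Real.sqrt (S k / mumin)) atTop (𝓝 0) := by
    have h1 : Tendsto (fun k => S k / mumin) atTop (𝓝 (0 / mumin)) := hS0.div_const mumin
    rw [zero_div] at h1
    simpa using h1.sqrt
  constructor
  · intro q hq
    have hq0 : q ≠ 0 := by linarith
    set B := Real.sqrt (D / mumin) with hB
    have hBp : ∀ k x, |u k x - u₀ x| ≤ B := fun k x => (hpb k x).trans (by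
      rw [hB]
      exact Real.sqrt_le_sqrt ((div_le_div_iff_of_pos_right hmin).mpr (hSD k)))
    set Kq := B ^ (q - 2) with hKq
    have hKq0 : 0 ≤ Kq := Real.rpow_nonneg (Real.sqrt_nonneg _) _
    have hterm : ∀ k x, mu x * |u k x - u₀ x| ^ q ≤ Kq * (mu x * (u k x - u₀ x)^2) := by
      intro k x
      have habs : 0 ≤ |u k x - u₀ x| := abs_nonneg _
      by_cases hz : u k x - u₀ x = 0
      · rw [hz]
        simp [Real.zero_rpow hq0]
      · have hpos : 0 < |u k x - u₀ x| := abs_pos.mpr hz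
        have e1 : |u k x - u₀ x| ^ q = |u k x - u₀ x| ^ (q-2) * |u k x - u₀ x| ^ (2:ℝ) := by
          rw [← Real.rpow_add hpos]
          norm_num
        have e2 : |u k x - u₀ x| ^ (2:ℝ) = (u k x - u₀ x)^2 := by
          rw [show (2:ℝ) = ((2:ℕ):ℝ) by norm_num, Real.rpow_natCast, sq_abs]
        have e3 : |u k x - u₀ x| ^ (q-2) ≤ Kq := by
          rw [hKq]
          exact Real.rpow_le_rpow habs (hBp k x) (by linarith)
        calc mu x * |u k x - u₀ x| ^ q
            = mu x * (|u k x - u₀ x| ^ (q-2) * (u k x - u₀ x)^2) := by rw [e1, e2]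
          _ ≤ mu x * (Kq * (u k x - u₀ x)^2) :=
              mul_le_mul_of_nonneg_left (mul_le_mul_of_nonneg_right e3 (sq_nonneg _)) (hmupos x).le
          _ = Kq * (mu x * (u k x - u₀ x)^2) := by ring
    have hsml : ∀ k, Summable (fun x => mu x * |u k x - u₀ x| ^ q) := fun k =>
      Summable.of_nonneg_of_le
        (fun x => mul_nonneg (hmupos x).le (Real.rpow_nonneg (abs_nonneg _) _))
        (fun x => hterm k x) ((hμv2 k).mul_left Kq)
    refine squeeze_zero (g := fun k => Kq * S k) (fun k => tsum_nonneg fun x =>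
      mul_nonneg (hmupos x).le (Real.rpow_nonneg (abs_nonneg _) _)) (fun k => ?_) ?_
    · calc (∑' x, mu x * |u k x - u₀ x| ^ q)
          ≤ ∑' x, Kq * (mu x * (u k x - u₀ x)^2) :=
            Summable.tsum_le_tsum (hterm k) (hsml k) ((hμv2 k).mul_left Kq)
        _ = Kq * S k := by rw [tsum_mul_left]
    · simpa using hS0.const_mul Kq
  · exact squeeze_zero hsup_nn hsup_le hsqrt
end
end

section
/- Let G be a finite (or the Dirichlet problem on a finite domain Ω of a locally finite) connected graph with symmetric positive weights and positive measure, and p≥2. Then the functional J_Ω(u) = (1/2)(∫_{Ω∪∂Ω}|∇u|²dμ + ∫_Ω u²dμ) − (1/(p+1))∫_Ω |u|^{p+1}dμ attains its infimum m_Ω on the Nehari manifold N_Ω = {u∈W₀^{1,2}(Ω)\{0} : ‖u‖²_{W₀^{1,2}(Ω)} = ‖u‖_{L^{p+1}(Ω)}^{p+1}}, and any minimizer is a (pointwise) solution of −Δu + u = |u|^{p−1}u in Ω with u=0 on ∂Ω. -/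
open Filter Topology Real

noncomputable section

/-- The μ-Laplacian Δu(x) on a locally finite graph. -/
def graphLap {V : Type*} (nbr : V → Finset V) (w : V → V → ℝ) (mu : V → ℝ)
    (u : V → ℝ) (x : V) : ℝ :=
  (1 / mu x) * ∑ y ∈ nbr x, w x y * (u y - u x)

/-- Squared W₀^{1,2}(Ω) norm: ∫_{Ω∪∂Ω}|∇u|²dμ + ∫_Ω u²dμ. -/
def w0NormSq {V : Type*} [DecidableEq V] (nbr : V → Finset V) (w : V → V → ℝ)
    (mu : V → ℝ) (Ω : Finset V) (u : V → ℝ) : ℝ :=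
  ∑ x ∈ Ω ∪ (Ω.biUnion nbr \ Ω), mu x * graphGamma nbr w mu u u x
    + ∑ x ∈ Ω, mu x * u x ^ 2

/-- The Dirichlet energy functional J_Ω. -/
def JOmega {V : Type*} [DecidableEq V] (nbr : V → Finset V) (w : V → V → ℝ)
    (mu : V → ℝ) (Ω : Finset V) (p : ℝ) (u : V → ℝ) : ℝ :=
  (1 / 2) * w0NormSq nbr w mu Ω u - (1 / (p + 1)) * ∑ x ∈ Ω, mu x * |u x| ^ (p + 1)

/-- The Nehari manifold N_Ω of the Dirichlet problem. -/
def nehariOmega {V : Type*} [DecidableEq V] (nbr : V → Finset V) (w : V → V → ℝ)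
    (mu : V → ℝ) (Ω : Finset V) (p : ℝ) (u : V → ℝ) : Prop :=
  u ≠ 0 ∧ (∀ x, x ∉ Ω → u x = 0) ∧
    w0NormSq nbr w mu Ω u = ∑ x ∈ Ω, mu x * |u x| ^ (p + 1)

set_option linter.unusedSectionVars false

namespace DGS

variable {V : Type*} [DecidableEq V] (nbr : V → Finset V) (w : V → V → ℝ) (mu : V → ℝ)
  (Ω : Finset V) (p : ℝ)

def dS : Finset V := Ω ∪ (Ω.biUnion nbr \ Ω)

def delta (x₀ : V) : V → ℝ := fun y => if y = x₀ then 1 else 0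

def bil (u v : V → ℝ) : ℝ :=
  ∑ x ∈ dS nbr Ω, mu x * graphGamma nbr w mu u v x + ∑ x ∈ Ω, mu x * (u x * v x)

def mass (u : V → ℝ) : ℝ := ∑ x ∈ Ω, mu x * u x ^ 2

def bnl (u : V → ℝ) : ℝ := ∑ x ∈ Ω, mu x * |u x| ^ (p + 1)

variable (hwpos : ∀ x y, y ∈ nbr x → 0 < w x y) (hmu : ∀ x, 0 < mu x)

section basic
include hwpos hmu

lemma gamma_nonneg (u : V → ℝ) (x : V) : 0 ≤ mu x * graphGamma nbr w mu u u x := by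
  unfold graphGamma
  have h : 0 ≤ ∑ y ∈ nbr x, w x y * ((u y - u x) * (u y - u x)) :=
    Finset.sum_nonneg fun y hy => mul_nonneg (hwpos x y hy).le (mul_self_nonneg _)
  have h3 := (hmu x).le
  have h2 : 0 ≤ 1 / (2 * mu x) := by
    apply div_nonneg zero_le_one; linarith
  exact mul_nonneg h3 (mul_nonneg h2 h)

lemma mass_le_A (u : V → ℝ) : mass mu Ω u ≤ w0NormSq nbr w mu Ω u := by
  have := Finset.sum_nonneg (fun x (_ : x ∈ Ω ∪ (Ω.biUnion nbr \ Ω)) =>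
    gamma_nonneg nbr w mu hwpos hmu u x)
  unfold w0NormSq mass; linarith

lemma A_nonneg (u : V → ℝ) : 0 ≤ w0NormSq nbr w mu Ω u := by
  refine le_trans ?_ (mass_le_A nbr w mu Ω hwpos hmu u)
  exact Finset.sum_nonneg fun x _ => mul_nonneg (hmu x).le (sq_nonneg _)

end basic

lemma bil_self (u : V → ℝ) : bil nbr w mu Ω u u = w0NormSq nbr w mu Ω u := by
  unfold bil w0NormSq dS
  congr 1
  exact Finset.sum_congr rfl fun x _ => by ring

lemma gamma_expand (u v : V → ℝ) (s : ℝ) (x : V) :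
    graphGamma nbr w mu (fun y => u y + s * v y) (fun y => u y + s * v y) x
      = graphGamma nbr w mu u u x + 2 * s * graphGamma nbr w mu u v x
        + s ^ 2 * graphGamma nbr w mu v v x := by
  unfold graphGamma
  simp only [Finset.mul_sum, ← Finset.sum_add_distrib]
  exact Finset.sum_congr rfl fun y _ => by ring

lemma expand (u v : V → ℝ) (s : ℝ) :
    w0NormSq nbr w mu Ω (fun x => u x + s * v x)
      = w0NormSq nbr w mu Ω u + 2 * s * bil nbr w mu Ω u v
        + s ^ 2 * w0NormSq nbr w mu Ω v := by
  unfold w0NormSq bil dS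
  have h1 : ∑ x ∈ Ω ∪ (Ω.biUnion nbr \ Ω),
      mu x * graphGamma nbr w mu (fun y => u y + s * v y) (fun y => u y + s * v y) x
      = ∑ x ∈ Ω ∪ (Ω.biUnion nbr \ Ω),
        (mu x * graphGamma nbr w mu u u x + 2 * s * (mu x * graphGamma nbr w mu u v x)
          + s ^ 2 * (mu x * graphGamma nbr w mu v v x)) :=
    Finset.sum_congr rfl fun x _ => by rw [gamma_expand]; ring
  have h2 : ∑ x ∈ Ω, mu x * (u x + s * v x) ^ 2
      = ∑ x ∈ Ω, (mu x * u x ^ 2 + 2 * s * (mu x * (u x * v x)) + s ^ 2 * (mu x * v x ^ 2)) :=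
    Finset.sum_congr rfl fun x _ => by ring
  simp only [h1, h2, Finset.sum_add_distrib, ← Finset.mul_sum]
  ring

end DGS

namespace DGS2
open DGS
variable {V : Type*} [DecidableEq V] (nbr : V → Finset V) (w : V → V → ℝ) (mu : V → ℝ)
  (Ω : Finset V)

lemma pairing (hsym : ∀ x y, y ∈ nbr x ↔ x ∈ nbr y) (hwsym : ∀ x y, w x y = w y x)
    (hmu : ∀ x, 0 < mu x) (u : V → ℝ) (x₀ : V) (hx₀ : x₀ ∈ Ω) :
    bil nbr w mu Ω u (delta x₀) = mu x₀ * (u x₀ - graphLap nbr w mu u x₀) := by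
  have hmune : mu x₀ ≠ 0 := (hmu x₀).ne'
  -- mass part
  have hmass : ∑ x ∈ Ω, mu x * (u x * delta x₀ x) = mu x₀ * u x₀ := by
    unfold delta
    rw [Finset.sum_congr rfl (fun x _ => show mu x * (u x * if x = x₀ then 1 else 0)
      = if x = x₀ then mu x * u x else 0 by split <;> ring)]
    rw [Finset.sum_ite_eq' Ω x₀ (fun x => mu x * u x)]
    simp [hx₀]
  -- gamma part
  set g : V → ℝ := fun x => mu x * graphGamma nbr w mu u (delta x₀) x with hg
  have hgval : ∀ x, g x = (1/2) * ∑ y ∈ nbr x, w x y * ((u y - u x) * (delta x₀ y - delta x₀ x)) := by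
    intro x
    have hne := (hmu x).ne'
    have hc : mu x * (1 / (2 * mu x)) = 1/2 := by field_simp
    simp only [hg]
    unfold graphGamma
    rw [← mul_assoc, hc]
  have hT : insert x₀ (nbr x₀) ⊆ dS nbr Ω := by
    intro x hx
    rcases Finset.mem_insert.mp hx with h | h
    · exact Finset.mem_union_left _ (h ▸ hx₀)
    · by_cases hxo : x ∈ Ω
      · exact Finset.mem_union_left _ hxo
      · exact Finset.mem_union_right _ (Finset.mem_sdiff.mpr
          ⟨Finset.mem_biUnion.mpr ⟨x₀, hx₀, h⟩, hxo⟩)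
  have hzero : ∀ x ∈ dS nbr Ω, x ∉ insert x₀ (nbr x₀) → g x = 0 := by
    intro x _ hx
    have hxne : x ≠ x₀ := fun h => hx (Finset.mem_insert.mpr (Or.inl h))
    have hxnn : x ∉ nbr x₀ := fun h => hx (Finset.mem_insert.mpr (Or.inr h))
    rw [hgval]
    rw [Finset.sum_eq_zero, mul_zero]
    intro y hy
    have hyne : y ≠ x₀ := by
      rintro rfl
      exact hxnn ((hsym x y).mp hy)
    unfold delta
    simp [hyne, hxne]
  have hsplit : ∑ x ∈ dS nbr Ω, g x = ∑ x ∈ insert x₀ (nbr x₀), g x :=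
    (Finset.sum_subset hT hzero).symm
  have hcancel : mu x₀ * (1 / mu x₀ * ∑ y ∈ nbr x₀, w x₀ y * (u y - u x₀))
      = ∑ y ∈ nbr x₀, w x₀ y * (u y - u x₀) := by
    rw [← mul_assoc, mul_one_div, div_self hmune, one_mul]
  have hgx₀ : g x₀ = -(1/2) * (mu x₀ * graphLap nbr w mu u x₀) := by
    rw [hgval]
    unfold graphLap
    rw [hcancel, show -(1/2) * (∑ y ∈ nbr x₀, w x₀ y * (u y - u x₀))
      = ∑ y ∈ nbr x₀, -(1/2) * (w x₀ y * (u y - u x₀)) from Finset.mul_sum _ _ _,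
      Finset.mul_sum]
    refine Finset.sum_congr rfl fun y hy => ?_
    by_cases h : y = x₀ <;> simp [delta, h] <;> ring
  have hrest : ∑ x ∈ (nbr x₀).erase x₀, g x = -(1/2) * (mu x₀ * graphLap nbr w mu u x₀) := by
    have hterm : ∀ x ∈ (nbr x₀).erase x₀, g x = (1/2) * (w x₀ x * (u x₀ - u x)) := by
      intro x hx
      obtain ⟨hxne, hxmem⟩ := Finset.mem_erase.mp hx
      rw [hgval]
      have hx₀x : x₀ ∈ nbr x := (hsym x₀ x).mp hxmem
      congr 1
      rw [Finset.sum_eq_single_of_mem x₀ hx₀x]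
      · unfold delta; simp [hxne, hwsym x x₀]
      · intro y hy hyne
        unfold delta
        simp [hyne, hxne]
    rw [Finset.sum_congr rfl hterm]
    have key : ∑ x ∈ nbr x₀, (1/2) * (w x₀ x * (u x₀ - u x))
        = -(1/2) * (mu x₀ * graphLap nbr w mu u x₀) := by
      unfold graphLap
      rw [hcancel, show -(1/2) * (∑ y ∈ nbr x₀, w x₀ y * (u y - u x₀))
        = ∑ y ∈ nbr x₀, -(1/2) * (w x₀ y * (u y - u x₀)) from Finset.mul_sum _ _ _]
      exact Finset.sum_congr rfl fun y _ => by ring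
    rw [← key]
    exact Finset.sum_erase _ (by simp)
  have hins : ∑ x ∈ insert x₀ (nbr x₀), g x = g x₀ + ∑ x ∈ (nbr x₀).erase x₀, g x := by
    rw [← Finset.add_sum_erase _ g (Finset.mem_insert_self x₀ (nbr x₀)),
      Finset.erase_insert_eq_erase]
  unfold bil
  rw [hmass]
  rw [show (∑ x ∈ dS nbr Ω, mu x * graphGamma nbr w mu u (delta x₀) x)
    = ∑ x ∈ dS nbr Ω, g x from rfl, hsplit, hins, hgx₀, hrest]
  ring

end DGS2

namespace DGS3
open DGS
variable {V : Type*} [DecidableEq V] (nbr : V → Finset V) (w : V → V → ℝ) (mu : V → ℝ)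
  (Ω : Finset V) (p : ℝ)

lemma deriv_abs_rpow (q : ℝ) (hq : 2 ≤ q) (t : ℝ) :
    HasDerivAt (fun t : ℝ => |t| ^ q) (q * |t| ^ (q - 2) * t) t := by
  have h1 : HasDerivAt (fun t : ℝ => t ^ 2) (2 * t) t := by
    simpa using hasDerivAt_pow 2 t
  have h3 : HasDerivAt (fun t : ℝ => (t ^ 2) ^ (q / 2))
      (2 * t * (q / 2) * (t ^ 2) ^ (q / 2 - 1)) t :=
    HasDerivAt.rpow_const (p := q / 2) h1 (Or.inr (by linarith))
  have habs : (fun t : ℝ => (t ^ 2) ^ (q / 2)) = fun t : ℝ => |t| ^ q := by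
    funext s
    rw [← sq_abs, ← Real.rpow_natCast |s| 2, ← Real.rpow_mul (abs_nonneg s)]
    norm_num
    congr 1
    ring
  have habs2 : (t ^ 2) ^ (q / 2 - 1) = |t| ^ (q - 2) := by
    rw [← sq_abs, ← Real.rpow_natCast |t| 2, ← Real.rpow_mul (abs_nonneg t)]
    congr 1
    ring
  rw [habs, habs2] at h3
  convert h3 using 1
  ring

lemma hasDerivAt_bnl (hp : 2 ≤ p) (u : V → ℝ) (x₀ : V) (hx₀ : x₀ ∈ Ω) :
    HasDerivAt (fun s => bnl mu Ω p (fun x => u x + s * delta x₀ x))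
      ((p + 1) * (mu x₀ * (|u x₀| ^ (p - 1) * u x₀))) 0 := by
  have hq : 2 ≤ p + 1 := by linarith
  have key : ∀ x ∈ Ω, HasDerivAt (fun s : ℝ => mu x * |u x + s * delta x₀ x| ^ (p + 1))
      (if x = x₀ then (p + 1) * (mu x₀ * (|u x₀| ^ (p - 1) * u x₀)) else 0) 0 := by
    intro x _
    by_cases h : x = x₀
    · subst h
      have hinner : HasDerivAt (fun s : ℝ => u x + s * delta x x) 1 0 := by
        simpa [delta] using ((hasDerivAt_id (0:ℝ)).mul_const (delta x x)).const_add (u x)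
      have houter := deriv_abs_rpow (p + 1) hq (u x + 0 * delta x x)
      have h3 := (houter.comp 0 hinner).const_mul (mu x)
      rw [if_pos rfl]
      refine h3.congr_deriv ?_
      simp only [delta, if_pos rfl, mul_one, zero_mul, add_zero]
      rw [show p + 1 - 2 = p - 1 by ring]
      ring
    · have : (fun s : ℝ => mu x * |u x + s * delta x₀ x| ^ (p + 1))
          = fun _ : ℝ => mu x * |u x| ^ (p + 1) := by
        funext s; simp [delta, h]
      rw [this, if_neg h]
      exact hasDerivAt_const _ _
  have hsum := HasDerivAt.fun_sum key
  have : ∑ x ∈ Ω, (if x = x₀ then (p + 1) * (mu x₀ * (|u x₀| ^ (p - 1) * u x₀)) else 0)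
      = (p + 1) * (mu x₀ * (|u x₀| ^ (p - 1) * u x₀)) := by
    rw [Finset.sum_ite_eq' Ω x₀ (fun _ => (p + 1) * (mu x₀ * (|u x₀| ^ (p - 1) * u x₀)))]
    simp [hx₀]
  rw [this] at hsum
  exact hsum

lemma hasDerivAt_A (u v : V → ℝ) :
    HasDerivAt (fun s => w0NormSq nbr w mu Ω (fun x => u x + s * v x))
      (2 * bil nbr w mu Ω u v) 0 := by
  have hfun : (fun s => w0NormSq nbr w mu Ω (fun x => u x + s * v x))
      = fun s => w0NormSq nbr w mu Ω u + 2 * s * bil nbr w mu Ω u v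
          + s ^ 2 * w0NormSq nbr w mu Ω v := by
    funext s; exact expand nbr w mu Ω u v s
  rw [hfun]
  have h1 : HasDerivAt (fun s : ℝ => w0NormSq nbr w mu Ω u + 2 * s * bil nbr w mu Ω u v)
      (2 * bil nbr w mu Ω u v) 0 := by
    have := ((hasDerivAt_id (0:ℝ)).const_mul (2 * bil nbr w mu Ω u v)).const_add
      (w0NormSq nbr w mu Ω u)
    have hf : (fun s : ℝ => w0NormSq nbr w mu Ω u + 2 * s * bil nbr w mu Ω u v)
        = fun x => w0NormSq nbr w mu Ω u + 2 * bil nbr w mu Ω u v * id x := by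
      funext s; simp only [id_eq]; ring
    rw [hf]; exact this.congr_deriv (mul_one _)
  have h2 : HasDerivAt (fun s : ℝ => s ^ 2 * w0NormSq nbr w mu Ω v) 0 0 := by
    have := (hasDerivAt_pow 2 (0:ℝ)).mul_const (w0NormSq nbr w mu Ω v)
    simpa using this
  simpa using h1.fun_add h2

lemma A_zero : w0NormSq nbr w mu Ω (fun _ => (0:ℝ)) = 0 := by
  unfold w0NormSq graphGamma; simp

lemma bil_zero (v : V → ℝ) : bil nbr w mu Ω (fun _ => (0:ℝ)) v = 0 := by
  unfold bil graphGamma; simp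

lemma A_smul (t : ℝ) (v : V → ℝ) :
    w0NormSq nbr w mu Ω (fun x => t * v x) = t ^ 2 * w0NormSq nbr w mu Ω v := by
  have h := expand nbr w mu Ω (fun _ => (0:ℝ)) v t
  rw [A_zero, bil_zero] at h
  simpa using h

lemma bnl_smul (t : ℝ) (ht : 0 < t) (v : V → ℝ) :
    bnl mu Ω p (fun x => t * v x) = t ^ (p + 1) * bnl mu Ω p v := by
  unfold bnl
  rw [Finset.mul_sum]
  refine Finset.sum_congr rfl fun x _ => ?_
  rw [abs_mul, abs_of_pos ht, Real.mul_rpow ht.le (abs_nonneg _)]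
  ring

end DGS3

namespace DGS4
open DGS DGS3
variable {V : Type*} [DecidableEq V] (nbr : V → Finset V) (w : V → V → ℝ) (mu : V → ℝ)
  (Ω : Finset V) (p : ℝ)

lemma mass_pos (hmu : ∀ x, 0 < mu x) (u : V → ℝ) (x₁ : V) (hx₁ : x₁ ∈ Ω) (hu : u x₁ ≠ 0) :
    0 < mass mu Ω u := by
  have h1 : 0 < mu x₁ * u x₁ ^ 2 := by
    have h := pow_pos (abs_pos.mpr hu) 2
    rw [sq_abs] at h
    exact mul_pos (hmu x₁) h
  have h2 : ∀ x ∈ Ω, 0 ≤ mu x * u x ^ 2 := fun x _ => mul_nonneg (hmu x).le (sq_nonneg _)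
  exact lt_of_lt_of_le h1 (Finset.single_le_sum h2 hx₁)

lemma bnl_pos (hmu : ∀ x, 0 < mu x) (u : V → ℝ) (x₁ : V) (hx₁ : x₁ ∈ Ω) (hu : u x₁ ≠ 0) :
    0 < bnl mu Ω p u := by
  have h1 : 0 < mu x₁ * |u x₁| ^ (p + 1) :=
    mul_pos (hmu x₁) (Real.rpow_pos_of_pos (abs_pos.mpr hu) _)
  have h2 : ∀ x ∈ Ω, 0 ≤ mu x * |u x| ^ (p + 1) := fun x _ =>
    mul_nonneg (hmu x).le (Real.rpow_nonneg (abs_nonneg _) _)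
  exact lt_of_lt_of_le h1 (Finset.single_le_sum h2 hx₁)

lemma exists_ne_of_nehari (u : V → ℝ) (hu : u ≠ 0) (hsupp : ∀ x, x ∉ Ω → u x = 0) :
    ∃ x₁ ∈ Ω, u x₁ ≠ 0 := by
  by_contra h
  push_neg at h
  exact hu (funext fun x => by
    by_cases hx : x ∈ Ω
    · exact h x hx
    · exact hsupp x hx)

lemma nehari_J (u : V → ℝ)
    (h : w0NormSq nbr w mu Ω u = ∑ x ∈ Ω, mu x * |u x| ^ (p + 1)) :
    JOmega nbr w mu Ω p u = (1/2 - 1/(p+1)) * w0NormSq nbr w mu Ω u := by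
  unfold JOmega
  rw [← h]
  ring

lemma N_mass_lower (hwpos : ∀ x y, y ∈ nbr x → 0 < w x y) (hmu : ∀ x, 0 < mu x)
    (hp : 2 ≤ p) (hne : Ω.Nonempty) (u : V → ℝ) (hN : nehariOmega nbr w mu Ω p u) :
    (Ω.image mu).min' (hne.image mu) ≤ mass mu Ω u := by
  obtain ⟨hu0, hsupp, hcon⟩ := hN
  obtain ⟨x₂, hx₂, hx₂ne⟩ := exists_ne_of_nehari Ω u hu0 hsupp
  set M := (Ω.image (fun x => |u x|)).max' (hne.image (fun x => |u x|)) with hM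
  have hleM : ∀ x ∈ Ω, |u x| ≤ M := by
    intro x hx
    rw [hM]
    exact Finset.le_max' (Ω.image (fun y => |u y|)) |u x| (Finset.mem_image_of_mem (fun y => |u y|) hx)
  obtain ⟨x₁, hx₁, hx₁M⟩ := Finset.mem_image.mp (Finset.max'_mem (Ω.image fun x => |u x|) (hne.image fun x => |u x|))
  have hMpos : 0 < M := lt_of_lt_of_le (abs_pos.mpr hx₂ne) (hleM x₂ hx₂)
  have hmasspos : 0 < mass mu Ω u := mass_pos mu Ω hmu u x₂ hx₂ hx₂ne
  -- bnl ≤ M^(p-1) * mass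
  have hbnl_le : bnl mu Ω p u ≤ M ^ (p - 1) * mass mu Ω u := by
    unfold bnl mass
    rw [Finset.mul_sum]
    refine Finset.sum_le_sum fun x hx => ?_
    rw [show M ^ (p-1) * (mu x * u x ^ 2) = mu x * (M ^ (p-1) * u x ^ 2) by ring]
    refine mul_le_mul_of_nonneg_left ?_ (hmu x).le
    by_cases h0 : u x = 0
    · rw [h0]
      rw [abs_zero, Real.zero_rpow (by linarith : p + 1 ≠ 0)]
      have : (0:ℝ) ≤ M ^ (p - 1) := Real.rpow_nonneg hMpos.le _
      nlinarith
    · have habs : 0 < |u x| := abs_pos.mpr h0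
      have : |u x| ^ (p + 1) = |u x| ^ (p - 1) * u x ^ 2 := by
        rw [← sq_abs, ← Real.rpow_natCast |u x| 2, ← Real.rpow_add habs]
        congr 1
        push_cast
        ring
      rw [this]
      refine mul_le_mul_of_nonneg_right ?_ (sq_nonneg _)
      exact Real.rpow_le_rpow habs.le (hleM x hx) (by linarith)
  have hmass_le : mass mu Ω u ≤ bnl mu Ω p u := by
    have h1 := mass_le_A nbr w mu Ω hwpos hmu u
    calc mass mu Ω u ≤ w0NormSq nbr w mu Ω u := h1
    _ = bnl mu Ω p u := hcon
  have h1M : 1 ≤ M := by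
    by_contra hlt
    push_neg at hlt
    have : M ^ (p - 1) < 1 := Real.rpow_lt_one hMpos.le hlt (by linarith)
    nlinarith
  have hux₁ : u x₁ ^ 2 = M ^ 2 := by rw [hM, ← hx₁M, sq_abs]
  have hterm : mu x₁ * u x₁ ^ 2 ≤ mass mu Ω u :=
    Finset.single_le_sum (fun x _ => mul_nonneg (hmu x).le (sq_nonneg _)) hx₁
  have hαle : (Ω.image mu).min' (hne.image mu) ≤ mu x₁ :=
    Finset.min'_le _ _ (Finset.mem_image_of_mem _ hx₁)
  nlinarith [hmu x₁, hterm, hux₁, h1M, mul_self_nonneg (M - 1)]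

def fray (u : V → ℝ) : ℝ := w0NormSq nbr w mu Ω u ^ (p + 1) / (bnl mu Ω p u) ^ 2

lemma fray_scale (hwpos : ∀ x y, y ∈ nbr x → 0 < w x y) (hmu : ∀ x, 0 < mu x)
    (t : ℝ) (ht : 0 < t) (v : V → ℝ) :
    fray nbr w mu Ω p (fun x => t * v x) = fray nbr w mu Ω p v := by
  unfold fray
  rw [A_smul, bnl_smul mu Ω p t ht, mul_pow,
    Real.mul_rpow (sq_nonneg t) (A_nonneg nbr w mu Ω hwpos hmu v)]
  have hX : (t ^ 2 : ℝ) ^ (p + 1) = (t ^ (p + 1)) ^ 2 := by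
    rw [← Real.rpow_natCast t 2, ← Real.rpow_mul ht.le, ← Real.rpow_natCast (t ^ (p+1)) 2,
      ← Real.rpow_mul ht.le]
    norm_num
    ring_nf
  rw [hX, mul_div_mul_left]
  exact pow_ne_zero 2 (Real.rpow_pos_of_pos ht _).ne'

lemma fray_of_nehari (hwpos : ∀ x y, y ∈ nbr x → 0 < w x y) (hmu : ∀ x, 0 < mu x)
    (hp : 2 ≤ p) (u : V → ℝ) (hN : nehariOmega nbr w mu Ω p u) :
    fray nbr w mu Ω p u = w0NormSq nbr w mu Ω u ^ (p - 1) := by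
  obtain ⟨hu0, hsupp, hcon⟩ := hN
  obtain ⟨x₁, hx₁, hne₁⟩ := exists_ne_of_nehari Ω u hu0 hsupp
  have hApos : 0 < w0NormSq nbr w mu Ω u :=
    lt_of_lt_of_le (mass_pos mu Ω hmu u x₁ hx₁ hne₁) (mass_le_A nbr w mu Ω hwpos hmu u)
  unfold fray
  rw [show bnl mu Ω p u = w0NormSq nbr w mu Ω u from hcon.symm]
  rw [← Real.rpow_natCast (w0NormSq nbr w mu Ω u) 2, ← Real.rpow_sub hApos]
  norm_num
  congr 1
  ring

lemma scale_to_nehari (hwpos : ∀ x y, y ∈ nbr x → 0 < w x y) (hmu : ∀ x, 0 < mu x)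
    (hp : 2 ≤ p) (v : V → ℝ) (hsupp : ∀ x, x ∉ Ω → v x = 0) (hbnl : 0 < bnl mu Ω p v) :
    ∃ t : ℝ, 0 < t ∧ nehariOmega nbr w mu Ω p (fun x => t * v x) := by
  obtain ⟨x₁, hx₁, hne₁⟩ : ∃ x₁ ∈ Ω, v x₁ ≠ 0 := by
    by_contra h
    push_neg at h
    have : bnl mu Ω p v = 0 := Finset.sum_eq_zero fun x hx => by
      rw [h x hx, abs_zero, Real.zero_rpow (by linarith : p + 1 ≠ 0), mul_zero]
    linarith
  have hApos : 0 < w0NormSq nbr w mu Ω v :=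
    lt_of_lt_of_le (mass_pos mu Ω hmu v x₁ hx₁ hne₁) (mass_le_A nbr w mu Ω hwpos hmu v)
  set A := w0NormSq nbr w mu Ω v
  set B := bnl mu Ω p v
  set t := (A / B) ^ ((p - 1)⁻¹) with htdef
  have hABpos : 0 < A / B := div_pos hApos hbnl
  have ht : 0 < t := Real.rpow_pos_of_pos hABpos _
  refine ⟨t, ht, ?_, fun x hx => by show t * v x = 0; rw [hsupp x hx, mul_zero], ?_⟩
  · intro h
    have := congrFun h x₁
    simp only [Pi.zero_apply] at this
    exact hne₁ (by
      rcases mul_eq_zero.mp this with h' | h'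
      · exact absurd h' ht.ne'
      · exact h')
  · show w0NormSq nbr w mu Ω (fun x => t * v x) = bnl mu Ω p (fun x => t * v x)
    rw [A_smul, bnl_smul mu Ω p t ht]
    have htp : t ^ (p - 1) = A / B := by
      rw [htdef, ← Real.rpow_mul hABpos.le, inv_mul_cancel₀ (by linarith : p - 1 ≠ 0),
        Real.rpow_one]
    have ht2 : t ^ (p + 1 : ℝ) = t ^ (p - 1) * t ^ 2 := by
      rw [← Real.rpow_natCast t 2, ← Real.rpow_add ht]
      congr 1
      push_cast
      ring
    rw [ht2, htp]
    field_simp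
    show A * B = A * B
    ring
end DGS4

namespace DGS5
open DGS DGS3 DGS4
variable {V : Type*} [DecidableEq V] (nbr : V → Finset V) (w : V → V → ℝ) (mu : V → ℝ)
  (Ω : Finset V) (p : ℝ)

lemma delta_supp (x₀ : V) (hx₀ : x₀ ∈ Ω) : ∀ x, x ∉ Ω → delta x₀ x = 0 := by
  intro x hx
  unfold delta
  rw [if_neg (fun h => hx (by rw [h]; exact hx₀))]

lemma contA : Continuous (fun u : V → ℝ => w0NormSq nbr w mu Ω u) := by
  unfold w0NormSq graphGamma
  refine Continuous.add ?_ ?_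
  · refine continuous_finset_sum _ fun x _ => Continuous.mul continuous_const ?_
    refine Continuous.mul continuous_const ?_
    refine continuous_finset_sum _ fun y _ => Continuous.mul continuous_const ?_
    exact Continuous.mul ((continuous_apply y).sub (continuous_apply x))
      ((continuous_apply y).sub (continuous_apply x))
  · exact continuous_finset_sum _ fun x _ =>
      Continuous.mul continuous_const ((continuous_apply x).pow 2)

lemma contBnl (hp : 2 ≤ p) : Continuous (fun u : V → ℝ => bnl mu Ω p u) := by
  unfold bnl
  refine continuous_finset_sum _ fun x _ => Continuous.mul continuous_const ?_
  exact Continuous.rpow_const (continuous_abs.comp (continuous_apply x))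
    (fun _ => Or.inr (by linarith))

lemma contMass : Continuous (fun u : V → ℝ => mass mu Ω u) := by
  unfold mass
  exact continuous_finset_sum _ fun x _ =>
    Continuous.mul continuous_const ((continuous_apply x).pow 2)

lemma contJ (hp : 2 ≤ p) : Continuous (fun u : V → ℝ => JOmega nbr w mu Ω p u) := by
  unfold JOmega
  exact ((continuous_const.mul (contA nbr w mu Ω)).sub
    (continuous_const.mul (contBnl mu Ω p hp)))

end DGS5


section Main
open DGS DGS2 DGS3 DGS4 DGS5


set_option maxHeartbeats 1000000 in
/-- The Dirichlet problem −Δu+u=|u|^{p−1}u on a finite connected domain Ω has a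
ground state: J_Ω attains its infimum m_Ω on N_Ω, and any minimizer is a
pointwise solution with u = 0 outside Ω. -/
theorem dirichlet_ground_state {V : Type*} [DecidableEq V]
    (nbr : V → Finset V) (w : V → V → ℝ) (mu : V → ℝ)
    (hsym : ∀ x y, y ∈ nbr x ↔ x ∈ nbr y)
    (hwpos : ∀ x y, y ∈ nbr x → 0 < w x y)
    (hwsym : ∀ x y, w x y = w y x)
    (hmu : ∀ x, 0 < mu x)
    (p : ℝ) (hp : 2 ≤ p)
    (Ω : Finset V) (hne : Ω.Nonempty)
    (hconn : ∀ x ∈ Ω, ∀ y ∈ Ω,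
      Relation.ReflTransGen (fun s t => t ∈ nbr s ∧ s ∈ Ω ∧ t ∈ Ω) x y) :
    (∃ u : V → ℝ, nehariOmega nbr w mu Ω p u ∧
      ∀ v : V → ℝ, nehariOmega nbr w mu Ω p v →
        JOmega nbr w mu Ω p u ≤ JOmega nbr w mu Ω p v) ∧
    (∀ u : V → ℝ, nehariOmega nbr w mu Ω p u →
      (∀ v : V → ℝ, nehariOmega nbr w mu Ω p v →
        JOmega nbr w mu Ω p u ≤ JOmega nbr w mu Ω p v) →
      ∀ x ∈ Ω, -graphLap nbr w mu u x + u x = |u x| ^ (p - 1) * u x) := by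
  classical
  have hp1 : (0:ℝ) < p + 1 := by linarith
  set c : ℝ := 1/2 - 1/(p+1) with hc
  have hc_pos : 0 < c := by
    have h2 : 1/(p+1) < 1/2 := by
      rw [div_lt_div_iff₀ hp1 (by norm_num : (0:ℝ) < 2)]
      linarith
    rw [hc]; linarith
  have hJN : ∀ u : V → ℝ, nehariOmega nbr w mu Ω p u →
      JOmega nbr w mu Ω p u = c * w0NormSq nbr w mu Ω u := by
    intro u hu
    rw [nehari_J nbr w mu Ω p u hu.2.2, hc]
  have hApos : ∀ u : V → ℝ, nehariOmega nbr w mu Ω p u → 0 < w0NormSq nbr w mu Ω u := by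
    intro u hu
    obtain ⟨x₁, hx₁, hne₁⟩ := exists_ne_of_nehari Ω u hu.1 hu.2.1
    exact lt_of_lt_of_le (mass_pos mu Ω hmu u x₁ hx₁ hne₁) (mass_le_A nbr w mu Ω hwpos hmu u)
  -- a point of the Nehari manifold
  obtain ⟨x₀, hx₀⟩ := hne
  have hδsupp : ∀ x, x ∉ Ω → delta x₀ x = 0 := delta_supp Ω x₀ hx₀
  have hδbnl : 0 < bnl mu Ω p (delta x₀) :=
    bnl_pos mu Ω p hmu (delta x₀) x₀ hx₀ (by unfold delta; simp)
  obtain ⟨t₀, ht₀, hN₀⟩ := scale_to_nehari nbr w mu Ω p hwpos hmu hp (delta x₀) hδsupp hδbnl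
  set u₀ : V → ℝ := fun x => t₀ * delta x₀ x with hu₀
  have hne' : Ω.Nonempty := ⟨x₀, hx₀⟩
  set α : ℝ := (Ω.image mu).min' (hne'.image mu) with hα
  have hα_pos : 0 < α := by
    obtain ⟨x₁, _, hx₁⟩ := Finset.mem_image.mp (Finset.min'_mem (Ω.image mu) (hne'.image mu))
    rw [hα, ← hx₁]
    exact hmu x₁
  -- Existence part
  have existence : ∃ u : V → ℝ, nehariOmega nbr w mu Ω p u ∧
      ∀ v : V → ℝ, nehariOmega nbr w mu Ω p v →
        JOmega nbr w mu Ω p u ≤ JOmega nbr w mu Ω p v := by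
    have hJ₀nonneg : 0 ≤ JOmega nbr w mu Ω p u₀ := by
      rw [hJN u₀ hN₀]
      exact mul_nonneg hc_pos.le (A_nonneg nbr w mu Ω hwpos hmu u₀)
    set R : V → ℝ := fun x => Real.sqrt (JOmega nbr w mu Ω p u₀ / (c * mu x)) with hR
    set K : Set (V → ℝ) := {u | (∀ x, x ∉ Ω → u x = 0)
      ∧ w0NormSq nbr w mu Ω u = bnl mu Ω p u
      ∧ α ≤ mass mu Ω u
      ∧ JOmega nbr w mu Ω p u ≤ JOmega nbr w mu Ω p u₀} with hK
    have hKclosed : IsClosed K := by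
      rw [hK]
      refine IsClosed.inter ?_ (IsClosed.inter ?_ (IsClosed.inter ?_ ?_))
      · show IsClosed {u : V → ℝ | ∀ x, x ∉ Ω → u x = 0}
        have heq : {u : V → ℝ | ∀ x, x ∉ Ω → u x = 0}
            = ⋂ x, {u : V → ℝ | x ∉ Ω → u x = 0} := by
          ext u; simp [Set.mem_iInter]
        rw [heq]
        refine isClosed_iInter fun x => ?_
        by_cases hx : x ∈ Ω
        · convert isClosed_univ using 1
          ext u; simp [hx]
        · have : {u : V → ℝ | x ∉ Ω → u x = 0} = {u : V → ℝ | u x = 0} := by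
            ext u; simp [hx]
          rw [this]
          exact isClosed_eq (continuous_apply x) continuous_const
      · exact isClosed_eq (contA nbr w mu Ω) (contBnl mu Ω p hp)
      · exact isClosed_le continuous_const (contMass mu Ω)
      · exact isClosed_le (contJ nbr w mu Ω p hp) continuous_const
    have hbox : IsCompact (Set.pi Set.univ fun x : V =>
        if x ∈ Ω then Set.Icc (-(R x)) (R x) else ({0} : Set ℝ)) := by
      refine isCompact_univ_pi fun x => ?_
      by_cases hx : x ∈ Ω
      · rw [if_pos hx]; exact isCompact_Icc
      · rw [if_neg hx]; exact isCompact_singleton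
    have hKsub : K ⊆ Set.pi Set.univ fun x : V =>
        if x ∈ Ω then Set.Icc (-(R x)) (R x) else ({0} : Set ℝ) := by
      intro u hu
      obtain ⟨hsupp, hcon, hmass, hJle⟩ := hu
      rw [Set.mem_univ_pi]
      intro x
      by_cases hx : x ∈ Ω
      · rw [if_pos hx]
        have hAu : c * w0NormSq nbr w mu Ω u ≤ JOmega nbr w mu Ω p u₀ := by
          have := nehari_J nbr w mu Ω p u hcon
          rw [← hc] at this
          linarith
        have h1 : mu x * u x ^ 2 ≤ w0NormSq nbr w mu Ω u :=
          le_trans (Finset.single_le_sum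
            (fun y (_ : y ∈ Ω) => mul_nonneg (hmu y).le (sq_nonneg (u y))) hx)
            (mass_le_A nbr w mu Ω hwpos hmu u)
        have h2 : u x ^ 2 ≤ JOmega nbr w mu Ω p u₀ / (c * mu x) := by
          rw [le_div_iff₀ (mul_pos hc_pos (hmu x))]
          nlinarith [hmu x, hc_pos]
        have h3 : |u x| ≤ R x := by
          rw [hR]
          have := Real.sqrt_le_sqrt h2
          rwa [Real.sqrt_sq_eq_abs] at this
        rw [Set.mem_Icc]
        exact abs_le.mp h3
      · rw [if_neg hx]
        simp [hsupp x hx]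
    have hKcompact : IsCompact K := hbox.of_isClosed_subset hKclosed hKsub
    have hu₀K : u₀ ∈ K := by
      refine ⟨hN₀.2.1, hN₀.2.2, ?_, le_refl _⟩
      exact N_mass_lower nbr w mu Ω p hwpos hmu hp hne' u₀ hN₀
    obtain ⟨u, huK, humin⟩ := hKcompact.exists_isMinOn ⟨u₀, hu₀K⟩
      ((contJ nbr w mu Ω p hp).continuousOn)
    obtain ⟨husupp, hucon, humass, huJ⟩ := huK
    have huN : nehariOmega nbr w mu Ω p u := by
      refine ⟨?_, husupp, hucon⟩
      intro h0
      rw [h0] at humass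
      have : mass mu Ω (0 : V → ℝ) = 0 := by
        unfold mass; simp
      rw [this] at humass
      linarith
    refine ⟨u, huN, ?_⟩
    intro v hv
    by_cases hJv : JOmega nbr w mu Ω p v ≤ JOmega nbr w mu Ω p u₀
    · have hvK : v ∈ K := ⟨hv.2.1, hv.2.2,
        N_mass_lower nbr w mu Ω p hwpos hmu hp hne' v hv, hJv⟩
      exact humin hvK
    · push_neg at hJv
      exact le_trans huJ hJv.le
  refine ⟨existence, ?_⟩
  -- Euler–Lagrange part
  intro u hN hmin y₀ hy₀
  have hAu : 0 < w0NormSq nbr w mu Ω u := hApos u hN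
  have hfmin : ∀ v : V → ℝ, (∀ x, x ∉ Ω → v x = 0) → 0 < bnl mu Ω p v →
      fray nbr w mu Ω p u ≤ fray nbr w mu Ω p v := by
    intro v hvsupp hvbnl
    obtain ⟨t, ht, hNv⟩ := scale_to_nehari nbr w mu Ω p hwpos hmu hp v hvsupp hvbnl
    have h1 := hmin _ hNv
    rw [hJN u hN, hJN _ hNv] at h1
    have h2 : w0NormSq nbr w mu Ω u ≤ w0NormSq nbr w mu Ω (fun x => t * v x) :=
      (mul_le_mul_iff_right₀ hc_pos).mp h1
    calc fray nbr w mu Ω p u = w0NormSq nbr w mu Ω u ^ (p - 1) :=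
          fray_of_nehari nbr w mu Ω p hwpos hmu hp u hN
    _ ≤ w0NormSq nbr w mu Ω (fun x => t * v x) ^ (p - 1) :=
          Real.rpow_le_rpow (A_nonneg nbr w mu Ω hwpos hmu u) h2 (by linarith)
    _ = fray nbr w mu Ω p (fun x => t * v x) :=
          (fray_of_nehari nbr w mu Ω p hwpos hmu hp _ hNv).symm
    _ = fray nbr w mu Ω p v := fray_scale nbr w mu Ω p hwpos hmu t ht v
  set us : ℝ → V → ℝ := fun s x => u x + s * delta y₀ x with hus
  have hus0 : us 0 = u := by
    funext x; rw [hus]; simp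
  have hussupp : ∀ s, ∀ x, x ∉ Ω → us s x = 0 := by
    intro s x hx
    rw [hus]
    simp only
    rw [hN.2.1 x hx, delta_supp Ω y₀ hy₀ x hx]
    ring
  have hbnlu : 0 < bnl mu Ω p u := by
    have : bnl mu Ω p u = w0NormSq nbr w mu Ω u := hN.2.2.symm
    linarith
  have hb := hasDerivAt_bnl mu Ω p hp u y₀ hy₀
  have hbfun : (fun s => bnl mu Ω p fun x => u x + s * delta y₀ x)
      = fun s => bnl mu Ω p (us s) := rfl
  rw [hbfun] at hb
  have hbnl_cont : ContinuousAt (fun s => bnl mu Ω p (us s)) 0 := hb.continuousAt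
  have hbnl0' : 0 < bnl mu Ω p (us 0) := by rw [hus0]; exact hbnlu
  have hev : ∀ᶠ s in 𝓝 (0:ℝ), 0 < bnl mu Ω p (us s) :=
    hbnl_cont (Ioi_mem_nhds hbnl0')
  have hlocmin : IsLocalMin (fun s => fray nbr w mu Ω p (us s)) 0 := by
    filter_upwards [hev] with s hs
    have h1 : fray nbr w mu Ω p (us 0) = fray nbr w mu Ω p u := by rw [hus0]
    rw [h1]
    exact hfmin (us s) (hussupp s) hs
  -- derivatives
  have ha := hasDerivAt_A nbr w mu Ω u (delta y₀)
  have hafun : (fun s => w0NormSq nbr w mu Ω fun x => u x + s * delta y₀ x)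
      = fun s => w0NormSq nbr w mu Ω (us s) := rfl
  rw [hafun] at ha
  set a' : ℝ := 2 * bil nbr w mu Ω u (delta y₀) with ha'
  set b' : ℝ := (p + 1) * (mu y₀ * (|u y₀| ^ (p - 1) * u y₀)) with hb'
  set A : ℝ := w0NormSq nbr w mu Ω u with hA
  have hA0 : w0NormSq nbr w mu Ω (us 0) = A := by rw [hus0]
  have hB0 : bnl mu Ω p (us 0) = A := by
    rw [hus0]
    exact hN.2.2.symm
  have hnum : HasDerivAt (fun s => w0NormSq nbr w mu Ω (us s) ^ (p + 1))
      (a' * (p + 1) * w0NormSq nbr w mu Ω (us 0) ^ (p + 1 - 1)) 0 :=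
    HasDerivAt.rpow_const (p := p + 1) ha (Or.inl (by rw [hA0]; exact hAu.ne'))
  have hden : HasDerivAt (fun s => bnl mu Ω p (us s) ^ 2)
      ((2 : ℕ) * bnl mu Ω p (us 0) ^ 1 * b') 0 := hb.pow 2
  have hquot := hnum.fun_div hden (by rw [hB0]; exact pow_ne_zero 2 hAu.ne')
  have hfray : (fun s => w0NormSq nbr w mu Ω (us s) ^ (p + 1) / bnl mu Ω p (us s) ^ 2)
      = fun s => fray nbr w mu Ω p (us s) := rfl
  rw [hfray] at hquot
  have hzero := hlocmin.hasDerivAt_eq_zero hquot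
  rw [hA0, hB0] at hzero
  -- extract the Euler–Lagrange relation
  have hnum0 : a' * (p + 1) * A ^ (p + 1 - 1) * A ^ 2 - A ^ (p + 1) * ((2:ℕ) * A ^ 1 * b') = 0 := by
    have hd : (A ^ 2) ^ 2 ≠ 0 := pow_ne_zero 2 (pow_ne_zero 2 hAu.ne')
    rcases div_eq_zero_iff.mp hzero with h | h
    · exact h
    · exact absurd h hd
  have hps : p + 1 - 1 = p := by ring
  rw [hps, Real.rpow_add hAu p 1, Real.rpow_one] at hnum0
  have hkey : (p + 1) * a' = 2 * b' := by
    have hne0 : A ^ p * A ^ 2 ≠ 0 :=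
      mul_ne_zero (Real.rpow_pos_of_pos hAu p).ne' (pow_ne_zero 2 hAu.ne')
    have h2 : A ^ p * A ^ 2 * ((p + 1) * a' - 2 * b') = 0 := by
      push_cast at hnum0
      linear_combination hnum0
    rcases mul_eq_zero.mp h2 with h | h
    · exact absurd h hne0
    · linarith [sub_eq_zero.mp h]
  rw [ha', hb'] at hkey
  rw [pairing nbr w mu Ω hsym hwsym hmu u y₀ hy₀] at hkey
  have hm : mu y₀ ≠ 0 := (hmu y₀).ne'
  have hfinal : u y₀ - graphLap nbr w mu u y₀ = |u y₀| ^ (p - 1) * u y₀ := by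
    have h3 : mu y₀ * ((p + 1) * 2) * (u y₀ - graphLap nbr w mu u y₀)
        = mu y₀ * ((p + 1) * 2) * (|u y₀| ^ (p - 1) * u y₀) := by
      linear_combination hkey
    have hne2 : mu y₀ * ((p + 1) * 2) ≠ 0 := by
      apply mul_ne_zero hm
      apply mul_ne_zero (by linarith) (by norm_num)
    exact mul_left_cancel₀ hne2 h3
  linarith [hfinal]

end Main
end
end

section
/- Let u_λ∈N_λ be a minimizer of J_λ over N_λ with m_λ = J_λ(u_λ). Then for every test function φ:V→ℝ with finite support, J_λ'(u_λ)·φ = 0; that is, ∫_V(Γ(u_λ,φ)+(λa+1)u_λφ)dμ = ∫_V |u_λ|^{p−1}u_λ φ dμ, so u_λ is a ground state (weak, hence pointwise) solution of −Δu+(λa(x)+1)u=|u|^{p−1}u. -/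
open Filter Topology Real

noncomputable section

/-- Integrand of the squared E_λ norm: μ(x)(|∇u|²(x) + (λa(x)+1)u(x)²). -/
def eInt {V : Type*} (nbr : V → Finset V) (w : V → V → ℝ) (mu a : V → ℝ)
    (lam : ℝ) (u : V → ℝ) (x : V) : ℝ :=
  mu x * (graphGamma nbr w mu u u x + (lam * a x + 1) * u x ^ 2)

/-- Squared E_λ norm: ∫_V(|∇u|²+(λa+1)u²)dμ. -/
def eNormSq {V : Type*} (nbr : V → Finset V) (w : V → V → ℝ) (mu a : V → ℝ)
    (lam : ℝ) (u : V → ℝ) : ℝ :=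
  ∑' x, eInt nbr w mu a lam u x

/-- Integrand of ∫_V |u|^{p+1} dμ. -/
def pInt {V : Type*} (mu : V → ℝ) (p : ℝ) (u : V → ℝ) (x : V) : ℝ :=
  mu x * |u x| ^ (p + 1)

/-- ∫_V |u|^{p+1} dμ. -/
def pNorm {V : Type*} (mu : V → ℝ) (p : ℝ) (u : V → ℝ) : ℝ :=
  ∑' x, pInt mu p u x

/-- Membership in E_λ (with finite L^{p+1} norm). -/
def memE {V : Type*} (nbr : V → Finset V) (w : V → V → ℝ) (mu a : V → ℝ)
    (lam p : ℝ) (u : V → ℝ) : Prop :=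
  Summable (eInt nbr w mu a lam u) ∧ Summable (pInt mu p u)

/-- The energy functional J_λ. -/
def Jfun {V : Type*} (nbr : V → Finset V) (w : V → V → ℝ) (mu a : V → ℝ)
    (lam p : ℝ) (u : V → ℝ) : ℝ :=
  (1 / 2) * eNormSq nbr w mu a lam u - (1 / (p + 1)) * pNorm mu p u

/-- The Nehari manifold N_λ. -/
def nehari {V : Type*} (nbr : V → Finset V) (w : V → V → ℝ) (mu a : V → ℝ)
    (lam p : ℝ) (u : V → ℝ) : Prop :=
  u ≠ 0 ∧ memE nbr w mu a lam p u ∧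
    eNormSq nbr w mu a lam u = pNorm mu p u

lemma eInt_expand {V : Type*} (nbr : V → Finset V) (w : V → V → ℝ) (mu a : V → ℝ)
    (lam : ℝ) (u φ : V → ℝ) (s : ℝ) (x : V) :
    eInt nbr w mu a lam (fun z => u z + s * φ z) x
      = eInt nbr w mu a lam u x
        + 2 * s * (mu x * (graphGamma nbr w mu u φ x + (lam * a x + 1) * (u x * φ x)))
        + s ^ 2 * eInt nbr w mu a lam φ x := by
  simp only [eInt, graphGamma]
  have h : ∑ y ∈ nbr x, w x y * (((u y + s * φ y) - (u x + s * φ x)) * ((u y + s * φ y) - (u x + s * φ x)))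
      = ∑ y ∈ nbr x, (w x y * ((u y - u x) * (u y - u x))
          + 2 * s * (w x y * ((u y - u x) * (φ y - φ x)))
          + s ^ 2 * (w x y * ((φ y - φ x) * (φ y - φ x)))) := by
    refine Finset.sum_congr rfl fun y _ => by ring
  rw [h, Finset.sum_add_distrib, Finset.sum_add_distrib, ← Finset.mul_sum, ← Finset.mul_sum]
  ring

lemma eInt_smul {V : Type*} (nbr : V → Finset V) (w : V → V → ℝ) (mu a : V → ℝ)
    (lam : ℝ) (v : V → ℝ) (t : ℝ) (x : V) :
    eInt nbr w mu a lam (fun z => t * v z) x = t ^ 2 * eInt nbr w mu a lam v x := by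
  simp only [eInt, graphGamma]
  have h : ∑ y ∈ nbr x, w x y * ((t * v y - t * v x) * (t * v y - t * v x))
      = ∑ y ∈ nbr x, t ^ 2 * (w x y * ((v y - v x) * (v y - v x))) :=
    Finset.sum_congr rfl fun y _ => by ring
  rw [h, ← Finset.mul_sum]
  ring

lemma pInt_smul {V : Type*} (mu : V → ℝ) (p : ℝ) (v : V → ℝ) {t : ℝ} (ht : 0 ≤ t) (x : V) :
    pInt mu p (fun z => t * v z) x = t ^ (p + 1) * pInt mu p v x := by
  simp only [pInt]
  rw [abs_mul, Real.mul_rpow (abs_nonneg t) (abs_nonneg (v x)), abs_of_nonneg ht]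
  ring

/-- A minimizer of J_λ over the Nehari manifold N_λ is a ground state solution:
J_λ'(u_λ)·φ = 0 for every finitely supported test function φ, i.e.
∫_V(Γ(u_λ,φ)+(λa+1)u_λφ)dμ = ∫_V |u_λ|^{p−1}u_λ φ dμ. -/
theorem minimizer_is_solution {V : Type*}
    (nbr : V → Finset V) (w : V → V → ℝ) (mu a : V → ℝ)
    (hsym : ∀ x y, y ∈ nbr x ↔ x ∈ nbr y)
    (hwpos : ∀ x y, y ∈ nbr x → 0 < w x y)
    (hwsym : ∀ x y, w x y = w y x)
    (mumin : ℝ) (hmin : 0 < mumin) (hmu : ∀ x, mumin ≤ mu x)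
    (ha0 : ∀ x, 0 ≤ a x)
    (lam p : ℝ) (hlam : 1 < lam) (hp : 2 ≤ p)
    (u : V → ℝ) (hneh : nehari nbr w mu a lam p u)
    (hmin' : ∀ v : V → ℝ, nehari nbr w mu a lam p v →
      Jfun nbr w mu a lam p u ≤ Jfun nbr w mu a lam p v) :
    ∀ φ : V → ℝ, (Function.support φ).Finite →
      ∑' x, mu x * (graphGamma nbr w mu u φ x + (lam * a x + 1) * (u x * φ x))
        = ∑' x, mu x * (|u x| ^ (p - 1) * u x * φ x) := by
  intro φ hφ
  obtain ⟨hune, ⟨hEsum, hPsum⟩, hEPeq⟩ := hneh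
  have hp1 : (0:ℝ) < p - 1 := by linarith
  have hp1ne : (p:ℝ) - 1 ≠ 0 := ne_of_gt hp1
  have hpp1 : (0:ℝ) < p + 1 := by linarith
  classical
  set S : Finset V := hφ.toFinset with hS
  set T : Finset V := S ∪ S.biUnion nbr with hT
  have hφ0 : ∀ x ∉ S, φ x = 0 := by
    intro x hx
    by_contra h
    exact hx (by simp [hS, Set.Finite.mem_toFinset, Function.mem_support, h])
  have hTzero : ∀ x ∉ T, φ x = 0 ∧ ∀ y ∈ nbr x, φ y = 0 := by
    intro x hx
    refine ⟨hφ0 x fun h => hx (Finset.mem_union_left _ h), fun y hy => ?_⟩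
    by_contra h
    have hyS : y ∈ S := by simp [hS, Set.Finite.mem_toFinset, Function.mem_support, h]
    exact hx (Finset.mem_union_right _ (Finset.mem_biUnion.2 ⟨y, hyS, (hsym x y).1 hy⟩))
  have hGamma0 : ∀ (v : V → ℝ), ∀ x ∉ T, graphGamma nbr w mu v φ x = 0 := by
    intro v x hx
    obtain ⟨h0, hn⟩ := hTzero x hx
    simp only [graphGamma]
    rw [Finset.sum_eq_zero fun y hy => by rw [hn y hy, h0]; ring]
    ring
  set cfun : V → ℝ := fun x =>
    mu x * (graphGamma nbr w mu u φ x + (lam * a x + 1) * (u x * φ x)) with hcfun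
  set dfun : V → ℝ := fun x => mu x * (|u x| ^ (p - 1) * u x * φ x) with hdfun
  have hc0 : ∀ x ∉ T, cfun x = 0 := by
    intro x hx
    simp only [hcfun]
    rw [hGamma0 u x hx, (hTzero x hx).1]
    ring
  have hd0 : ∀ x ∉ S, dfun x = 0 := by
    intro x hx
    simp only [hdfun]
    rw [hφ0 x hx]
    ring
  have hcsum : Summable cfun := summable_of_ne_finset_zero hc0
  set B : ℝ := ∑ x ∈ T, cfun x with hB
  set D : ℝ := ∑ x ∈ S, dfun x with hD
  -- reduce goal to B = D
  rw [show (∑' x, mu x * (graphGamma nbr w mu u φ x + (lam * a x + 1) * (u x * φ x))) = B from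
      tsum_eq_sum hc0,
    show (∑' x, mu x * (|u x| ^ (p - 1) * u x * φ x)) = D from tsum_eq_sum hd0]
  -- finite-support pieces of eInt φ
  have heφ0 : ∀ x ∉ T, eInt nbr w mu a lam φ x = 0 := by
    intro x hx
    simp only [eInt]
    rw [hGamma0 φ x hx, (hTzero x hx).1]
    ring
  have heφsum : Summable (eInt nbr w mu a lam φ) := summable_of_ne_finset_zero heφ0
  set E2 : ℝ := ∑ x ∈ T, eInt nbr w mu a lam φ x with hE2
  set E0 : ℝ := eNormSq nbr w mu a lam u with hE0
  set P0 : ℝ := pNorm mu p u with hP0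
  -- positivity of the norm
  have hmux : ∀ x, 0 < mu x := fun x => hmin.trans_le (hmu x)
  have hEnonneg : ∀ (v : V → ℝ) (x : V), 0 ≤ eInt nbr w mu a lam v x := by
    intro v x
    have hμ := hmux x
    have hΓ : 0 ≤ graphGamma nbr w mu v v x := by
      apply mul_nonneg (by positivity)
      exact Finset.sum_nonneg fun y hy => mul_nonneg (hwpos x y hy).le (mul_self_nonneg _)
    have h2 : 0 ≤ (lam * a x + 1) * v x ^ 2 := by
      apply mul_nonneg
      · nlinarith [ha0 x]
      · positivity
    exact mul_nonneg hμ.le (add_nonneg hΓ h2)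
  have hm : 0 < E0 := by
    obtain ⟨x0, hx0⟩ : ∃ x, u x ≠ 0 := by
      by_contra h
      push_neg at h
      exact hune (funext h)
    have h1 : 0 < eInt nbr w mu a lam u x0 := by
      have hμ := hmux x0
      have hΓ : 0 ≤ graphGamma nbr w mu u u x0 := by
        apply mul_nonneg (by positivity)
        exact Finset.sum_nonneg fun y hy => mul_nonneg (hwpos x0 y hy).le (mul_self_nonneg _)
      have hu2 : 0 < u x0 ^ 2 := by positivity
      have hla : 1 ≤ lam * a x0 + 1 := by nlinarith [ha0 x0]
      simp only [eInt]
      nlinarith [mul_pos hμ hu2, mul_nonneg hμ.le hΓ,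
        mul_nonneg (mul_nonneg hμ.le hu2.le) (sub_nonneg.2 hla)]
    exact h1.trans_le (Summable.le_tsum hEsum x0 fun b _ => hEnonneg u b)
  have hP0E0 : P0 = E0 := hEPeq.symm
  -- the two deformation functions
  set Efun : ℝ → ℝ := fun s => E0 + 2 * s * B + s ^ 2 * E2 with hEfun
  set Pfun : ℝ → ℝ := fun s =>
    P0 + ∑ x ∈ S, mu x * (|u x + s * φ x| ^ (p + 1) - |u x| ^ (p + 1)) with hPfun
  have hEs : ∀ s : ℝ, Summable (eInt nbr w mu a lam (fun z => u z + s * φ z)) ∧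
      eNormSq nbr w mu a lam (fun z => u z + s * φ z) = Efun s := by
    intro s
    have hfun : eInt nbr w mu a lam (fun z => u z + s * φ z)
        = fun x => eInt nbr w mu a lam u x + (2 * s) * cfun x
            + s ^ 2 * eInt nbr w mu a lam φ x := by
      funext x
      rw [eInt_expand]
    constructor
    · rw [hfun]
      exact (hEsum.add (hcsum.mul_left _)).add (heφsum.mul_left _)
    · rw [eNormSq, hfun, Summable.tsum_add (hEsum.add (hcsum.mul_left _)) (heφsum.mul_left _),
        Summable.tsum_add hEsum (hcsum.mul_left _), tsum_mul_left, tsum_mul_left,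
        tsum_eq_sum hc0, tsum_eq_sum heφ0]
      simp only [hEfun, hE0, eNormSq, hB, hE2]
  have hPs : ∀ s : ℝ, Summable (pInt mu p (fun z => u z + s * φ z)) ∧
      pNorm mu p (fun z => u z + s * φ z) = Pfun s := by
    intro s
    have hdz : ∀ x ∉ S, mu x * (|u x + s * φ x| ^ (p + 1) - |u x| ^ (p + 1)) = 0 := by
      intro x hx
      rw [hφ0 x hx]
      simp
    have hfun : pInt mu p (fun z => u z + s * φ z)
        = fun x => pInt mu p u x + mu x * (|u x + s * φ x| ^ (p + 1) - |u x| ^ (p + 1)) := by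
      funext x
      simp only [pInt]
      ring
    constructor
    · rw [hfun]
      exact hPsum.add (summable_of_ne_finset_zero hdz)
    · rw [pNorm, hfun, Summable.tsum_add hPsum (summable_of_ne_finset_zero hdz), tsum_eq_sum hdz]
      simp only [hPfun, hP0, pNorm]
  have hEf0 : Efun 0 = E0 := by simp [hEfun]
  have hPf0 : Pfun 0 = E0 := by
    simp only [hPfun]
    rw [hP0E0]
    simp
  -- derivatives at 0
  have hdE : HasDerivAt Efun (2 * B) 0 := by
    have h1 : HasDerivAt (fun s : ℝ => 2 * s * B) (2 * B) 0 := by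
      simpa using ((hasDerivAt_id (0:ℝ)).const_mul 2).mul_const B
    have h2 : HasDerivAt (fun s : ℝ => s ^ 2 * E2) 0 0 := by
      simpa using (hasDerivAt_pow 2 (0:ℝ)).mul_const E2
    have := ((hasDerivAt_const (0:ℝ) E0).add h1).add h2
    simpa [hEfun, Pi.add_def] using this
  set P' : ℝ := ∑ x ∈ S, mu x * ((p + 1) * |u x| ^ (p - 1) * u x * φ x) with hP'
  have hdP : HasDerivAt Pfun P' 0 := by
    have hterm : ∀ x ∈ S, HasDerivAt
        (fun s : ℝ => mu x * (|u x + s * φ x| ^ (p + 1) - |u x| ^ (p + 1)))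
        (mu x * ((p + 1) * |u x| ^ (p - 1) * u x * φ x)) 0 := by
      intro x _
      have inner : HasDerivAt (fun s : ℝ => u x + s * φ x) (φ x) 0 := by
        simpa using ((hasDerivAt_id (0:ℝ)).mul_const (φ x)).const_add (u x)
      have habs := hasDerivAt_abs_rpow (u x + 0 * φ x) (p := p + 1) (by linarith)
      have comp : HasDerivAt (fun s : ℝ => |u x + s * φ x| ^ (p + 1))
          (((p + 1) * |u x + 0 * φ x| ^ (p + 1 - 2) * (u x + 0 * φ x)) * φ x) 0 :=
        by have := habs.comp 0 inner; exact this
      have comp' : HasDerivAt (fun s : ℝ => |u x + s * φ x| ^ (p + 1))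
          ((p + 1) * |u x| ^ (p - 1) * u x * φ x) 0 := by
        have : p + 1 - 2 = p - 1 := by ring
        simpa [this, mul_assoc] using comp
      exact ((comp'.sub_const (|u x| ^ (p + 1))).const_mul (mu x))
    have hsum := HasDerivAt.sum hterm
    have := hsum.const_add P0
    simpa [hPfun, hP'] using this
  -- eventual positivity
  have hevE : ∀ᶠ s in 𝓝 (0:ℝ), 0 < Efun s :=
    Filter.Tendsto.eventually_const_lt (by rw [hEf0]; exact hm) hdE.continuousAt
  have hevP : ∀ᶠ s in 𝓝 (0:ℝ), 0 < Pfun s :=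
    Filter.Tendsto.eventually_const_lt (by rw [hPf0]; exact hm) hdP.continuousAt
  -- the reduced functional along the fibering map
  set g : ℝ → ℝ := fun s => (Efun s / Pfun s) ^ ((2:ℝ) / (p - 1)) * Efun s with hg
  have hcpos : (0:ℝ) < 1 / 2 - 1 / (p + 1) := by
    rw [show (1:ℝ) / 2 - 1 / (p + 1) = (p - 1) / (2 * (p + 1)) by field_simp; ring]
    positivity
  have hg0 : g 0 = E0 := by
    simp only [hg, hEf0, hPf0]
    rw [div_self (ne_of_gt hm), Real.one_rpow, one_mul]
  have hJu : Jfun nbr w mu a lam p u = (1 / 2 - 1 / (p + 1)) * E0 := by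
    simp only [Jfun, ← hE0, ← hP0, hP0E0]
    ring
  have hkey : ∀ᶠ s in 𝓝 (0:ℝ), g 0 ≤ g s := by
    filter_upwards [hevE, hevP] with s hEpos hPpos
    set ts : ℝ := (Efun s / Pfun s) ^ ((1:ℝ) / (p - 1)) with hts
    have htspos : 0 < ts := Real.rpow_pos_of_pos (div_pos hEpos hPpos) _
    set vs : V → ℝ := fun z => u z + s * φ z with hvs
    have htsp : ts ^ (p - 1 : ℝ) = Efun s / Pfun s := by
      rw [hts, ← Real.rpow_mul (div_nonneg hEpos.le hPpos.le), one_div,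
        inv_mul_cancel₀ hp1ne, Real.rpow_one]
    have hts2 : ts ^ (2:ℕ) = (Efun s / Pfun s) ^ ((2:ℝ) / (p - 1)) := by
      rw [← Real.rpow_natCast ts 2, hts, ← Real.rpow_mul (div_nonneg hEpos.le hPpos.le)]
      congr 1
      push_cast
      ring
    have htsp1 : ts ^ (p + 1 : ℝ) * Pfun s = ts ^ (2:ℕ) * Efun s := by
      rw [show (p + 1 : ℝ) = 2 + (p - 1) by ring, Real.rpow_add htspos, htsp]
      rw [show ((2:ℝ) : ℝ) = ((2:ℕ) : ℝ) by norm_num, Real.rpow_natCast]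
      field_simp
    have hEvs : eNormSq nbr w mu a lam (fun z => ts * vs z) = ts ^ (2:ℕ) * Efun s := by
      rw [eNormSq]
      calc (∑' x, eInt nbr w mu a lam (fun z => ts * vs z) x)
          = ∑' x, ts ^ (2:ℕ) * eInt nbr w mu a lam vs x :=
            tsum_congr fun x => eInt_smul nbr w mu a lam vs ts x
        _ = ts ^ (2:ℕ) * ∑' x, eInt nbr w mu a lam vs x := tsum_mul_left
        _ = ts ^ (2:ℕ) * Efun s := by rw [← eNormSq, (hEs s).2]
    have hPvs : pNorm mu p (fun z => ts * vs z) = ts ^ (p + 1 : ℝ) * Pfun s := by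
      rw [pNorm]
      calc (∑' x, pInt mu p (fun z => ts * vs z) x)
          = ∑' x, ts ^ (p + 1 : ℝ) * pInt mu p vs x :=
            tsum_congr fun x => pInt_smul mu p vs htspos.le x
        _ = ts ^ (p + 1 : ℝ) * ∑' x, pInt mu p vs x := tsum_mul_left
        _ = ts ^ (p + 1 : ℝ) * Pfun s := by rw [← pNorm, (hPs s).2]
    have hnevs : nehari nbr w mu a lam p (fun z => ts * vs z) := by
      refine ⟨?_, ⟨?_, ?_⟩, ?_⟩
      · intro h0
        have hvz : ∀ z, vs z = 0 := by
          intro z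
          have := congrFun h0 z
          simp only [Pi.zero_apply] at this
          exact (mul_eq_zero.1 this).resolve_left (ne_of_gt htspos)
        have : pNorm mu p vs = 0 := by
          rw [pNorm]
          have : ∀ x, pInt mu p vs x = 0 := by
            intro x
            simp [pInt, hvz x, Real.zero_rpow (by positivity : (p:ℝ) + 1 ≠ 0)]
          simp [this]
        rw [(hPs s).2] at this
        exact absurd this (ne_of_gt hPpos)
      · have hfun : eInt nbr w mu a lam (fun z => ts * vs z)
            = fun x => ts ^ (2:ℕ) * eInt nbr w mu a lam vs x :=
          funext fun x => eInt_smul nbr w mu a lam vs ts x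
        rw [hfun]
        exact (hEs s).1.mul_left _
      · have hfun : pInt mu p (fun z => ts * vs z)
            = fun x => ts ^ (p + 1 : ℝ) * pInt mu p vs x :=
          funext fun x => pInt_smul mu p vs htspos.le x
        rw [hfun]
        exact (hPs s).1.mul_left _
      · rw [hEvs, hPvs, htsp1]
    have hJvs : Jfun nbr w mu a lam p (fun z => ts * vs z) = (1 / 2 - 1 / (p + 1)) * g s := by
      rw [Jfun, hEvs, hPvs, htsp1, hg]
      rw [hts2]
      ring
    have := hmin' _ hnevs
    rw [hJu, hJvs] at this
    rw [hg0]
    calc E0 = g 0 := hg0.symm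
      _ ≤ g s := by
        rw [hg0]
        exact (mul_le_mul_iff_right₀ hcpos).1 this
    -- note: goal shape may differ; fix later
  have hlocmin : IsLocalMin g 0 := hkey
  -- derivative of g at 0
  have hq : HasDerivAt (fun s => Efun s / Pfun s)
      ((2 * B * Pfun 0 - Efun 0 * P') / Pfun 0 ^ 2) 0 :=
    hdE.div hdP (by rw [hPf0]; exact ne_of_gt hm)
  have hr : HasDerivAt (fun s => (Efun s / Pfun s) ^ ((2:ℝ) / (p - 1)))
      ((2 * B * Pfun 0 - Efun 0 * P') / Pfun 0 ^ 2 * ((2:ℝ) / (p - 1))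
        * (Efun 0 / Pfun 0) ^ ((2:ℝ) / (p - 1) - 1)) 0 := by
    refine hq.rpow_const (Or.inl ?_)
    rw [hEf0, hPf0, div_self (ne_of_gt hm)]
    norm_num
  have hdg : HasDerivAt g
      (((2 * B * Pfun 0 - Efun 0 * P') / Pfun 0 ^ 2 * ((2:ℝ) / (p - 1))
        * (Efun 0 / Pfun 0) ^ ((2:ℝ) / (p - 1) - 1)) * Efun 0
       + (Efun 0 / Pfun 0) ^ ((2:ℝ) / (p - 1)) * (2 * B)) 0 := hr.mul hdE
  have heq := hlocmin.hasDerivAt_eq_zero hdg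
  rw [hEf0, hPf0, div_self (ne_of_gt hm), Real.one_rpow, Real.one_rpow] at heq
  have hP'D : P' = (p + 1) * D := by
    rw [hP', hD, Finset.mul_sum]
    refine Finset.sum_congr rfl fun x _ => by simp only [hdfun]; ring
  rw [hP'D] at heq
  -- solve for B = D
  have hmne : E0 ≠ 0 := ne_of_gt hm
  field_simp at heq
  have h2 : (B - D) * (2 * (p + 1) * E0 ^ 2) = 0 := by linear_combination E0 ^ 2 * heq
  have hne : 2 * (p + 1) * E0 ^ 2 ≠ 0 := by positivity
  have h3 := (mul_eq_zero.mp h2).resolve_right hne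
  linarith
end
end

section
/- Let λ_k→∞ and u_{λ_k} be ground state solutions of −Δu+(λ_k a+1)u=|u|^{p−1}u with ground state levels m_{λ_k}. Then, up to a subsequence, u_{λ_k} converges strongly in W^{1,2}(V) to a function u₀ supported in the potential well Ω={a=0}, u₀ is a ground state solution of the Dirichlet problem −Δu+u=|u|^{p−1}u in Ω with u=0 on ∂Ω, and moreover λ_k∫_V a(x)u_{λ_k}² dμ → 0 and ∫_V|∇u_{λ_k}|²dμ → ∫_V|∇u₀|²dμ. -/
open Filter Topology Real

noncomputable section

section auxlemmas

variable {V : Type*}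

lemma gamma_nonneg (nbr : V → Finset V) (w : V → V → ℝ) (mu : V → ℝ) (f : V → ℝ) (x : V)
    (hw : ∀ y ∈ nbr x, 0 ≤ w x y) (hmux : 0 ≤ mu x) :
    0 ≤ graphGamma nbr w mu f f x := by
  apply mul_nonneg (by positivity)
  exact Finset.sum_nonneg fun y hy => mul_nonneg (hw y hy) (mul_self_nonneg _)

lemma gamma_smul (nbr : V → Finset V) (w : V → V → ℝ) (mu : V → ℝ)
    (t : ℝ) (f g : V → ℝ) (x : V) :
    graphGamma nbr w mu (fun y => t * f y) (fun y => t * g y) x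
      = t ^ 2 * graphGamma nbr w mu f g x := by
  unfold graphGamma
  rw [Finset.mul_sum, Finset.mul_sum, Finset.mul_sum]
  congr 1; ext y; ring

lemma gamma_sub (nbr : V → Finset V) (w : V → V → ℝ) (mu : V → ℝ) (f g : V → ℝ) (x : V) :
    graphGamma nbr w mu (f - g) (f - g) x
      = graphGamma nbr w mu f f x - 2 * graphGamma nbr w mu f g x
        + graphGamma nbr w mu g g x := by
  unfold graphGamma
  have : ∀ y ∈ nbr x, w x y * (((f - g) y - (f - g) x) * ((f - g) y - (f - g) x))
      = w x y * ((f y - f x) * (f y - f x))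
        - 2 * (w x y * ((f y - f x) * (g y - g x)))
        + w x y * ((g y - g x) * (g y - g x)) := by
    intro y _; simp only [Pi.sub_apply]; ring
  rw [Finset.sum_congr rfl this, Finset.sum_add_distrib, Finset.sum_sub_distrib,
    ← Finset.mul_sum]
  ring

variable [DecidableEq V]

lemma gamma_zero_of (nbr : V → Finset V) (w : V → V → ℝ)
    (mu : V → ℝ) (Ω : Finset V) (hsym : ∀ x y, y ∈ nbr x ↔ x ∈ nbr y)
    (f g : V → ℝ) (hg : ∀ y ∉ Ω, g y = 0) (x : V)
    (hx : x ∉ Ω ∪ Ω.biUnion nbr) :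
    graphGamma nbr w mu f g x = 0 := by
  have hxΩ : x ∉ Ω := fun h => hx (Finset.mem_union_left _ h)
  have hgx : g x = 0 := hg x hxΩ
  unfold graphGamma
  rw [Finset.sum_eq_zero, mul_zero]
  intro y hy
  have hgy : g y = 0 := by
    apply hg; intro hyΩ
    exact hx (Finset.mem_union_right _ (Finset.mem_biUnion.mpr ⟨y, hyΩ, (hsym x y).mp hy⟩))
  rw [hgy, hgx]; ring

lemma eInt_support (nbr : V → Finset V) (w : V → V → ℝ) (mu a : V → ℝ)
    (lam : ℝ) (Ω : Finset V) (hsym : ∀ x y, y ∈ nbr x ↔ x ∈ nbr y)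
    (v : V → ℝ) (hv : ∀ x ∉ Ω, v x = 0) :
    ∀ x ∉ Ω ∪ Ω.biUnion nbr, eInt nbr w mu a lam v x = 0 := by
  intro x hx
  have h1 : graphGamma nbr w mu v v x = 0 := gamma_zero_of nbr w mu Ω hsym v v hv x hx
  have h2 : v x = 0 := hv x fun h => hx (Finset.mem_union_left _ h)
  simp [eInt, h1, h2]

lemma eNormSq_supported (nbr : V → Finset V) (w : V → V → ℝ) (mu a : V → ℝ)
    (lam : ℝ) (Ω : Finset V) (hsym : ∀ x y, y ∈ nbr x ↔ x ∈ nbr y)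
    (hΩ : ∀ x ∈ Ω, a x = 0) (v : V → ℝ) (hv : ∀ x ∉ Ω, v x = 0) :
    eNormSq nbr w mu a lam v = w0NormSq nbr w mu Ω v := by
  rw [eNormSq, tsum_eq_sum (s := Ω ∪ Ω.biUnion nbr)
    (eInt_support nbr w mu a lam Ω hsym v hv)]
  unfold eInt w0NormSq
  rw [Finset.union_sdiff_self_eq_union]
  have : ∀ x ∈ Ω ∪ Ω.biUnion nbr,
      mu x * (graphGamma nbr w mu v v x + (lam * a x + 1) * v x ^ 2)
        = mu x * graphGamma nbr w mu v v x + mu x * ((lam * a x + 1) * v x ^ 2) := by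
    intro x _; ring
  rw [Finset.sum_congr rfl this, Finset.sum_add_distrib]
  congr 1
  rw [← Finset.sum_subset (Finset.subset_union_left : Ω ⊆ Ω ∪ Ω.biUnion nbr)
    (fun x _ hx => by rw [hv x hx]; ring)]
  exact Finset.sum_congr rfl fun x hx => by rw [hΩ x hx]; ring

omit [DecidableEq V] in
lemma pInt_support (mu : V → ℝ) (p : ℝ) (Ω : Finset V)
    (v : V → ℝ) (hv : ∀ x ∉ Ω, v x = 0) (hp : p + 1 ≠ 0) :
    ∀ x ∉ Ω, pInt mu p v x = 0 := by
  intro x hx; rw [pInt, hv x hx]; simp [Real.zero_rpow hp]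

omit [DecidableEq V] in
lemma pNorm_supported (mu : V → ℝ) (p : ℝ) (Ω : Finset V)
    (v : V → ℝ) (hv : ∀ x ∉ Ω, v x = 0) (hp : p + 1 ≠ 0) :
    pNorm mu p v = ∑ x ∈ Ω, mu x * |v x| ^ (p + 1) := by
  rw [pNorm, tsum_eq_sum (pInt_support mu p Ω v hv hp)]; rfl

lemma Jfun_eq_JOmega (nbr : V → Finset V) (w : V → V → ℝ) (mu a : V → ℝ)
    (lam p : ℝ) (Ω : Finset V) (hsym : ∀ x y, y ∈ nbr x ↔ x ∈ nbr y)
    (hΩ : ∀ x ∈ Ω, a x = 0) (v : V → ℝ) (hv : ∀ x ∉ Ω, v x = 0) (hp : p + 1 ≠ 0) :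
    Jfun nbr w mu a lam p v = JOmega nbr w mu Ω p v := by
  unfold Jfun JOmega
  rw [eNormSq_supported nbr w mu a lam Ω hsym hΩ v hv, pNorm_supported mu p Ω v hv hp]

lemma w0_smul (nbr : V → Finset V) (w : V → V → ℝ) (mu : V → ℝ) (Ω : Finset V)
    (t : ℝ) (f : V → ℝ) :
    w0NormSq nbr w mu Ω (fun y => t * f y) = t ^ 2 * w0NormSq nbr w mu Ω f := by
  unfold w0NormSq
  rw [mul_add, Finset.mul_sum, Finset.mul_sum]
  congr 1
  · exact Finset.sum_congr rfl fun x _ => by rw [gamma_smul]; ring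
  · exact Finset.sum_congr rfl fun x _ => by ring

omit [DecidableEq V] in
lemma pSum_smul (mu : V → ℝ) (Ω : Finset V) (p : ℝ) (hp : 0 < p + 1)
    (t : ℝ) (ht : 0 < t) (f : V → ℝ) :
    ∑ x ∈ Ω, mu x * |t * f x| ^ (p + 1) = t ^ (p + 1) * ∑ x ∈ Ω, mu x * |f x| ^ (p + 1) := by
  rw [Finset.mul_sum]
  refine Finset.sum_congr rfl fun x _ => ?_
  rw [abs_mul, abs_of_pos ht, Real.mul_rpow ht.le (abs_nonneg _)]
  ring

lemma nehariOmega_scale (nbr : V → Finset V) (w : V → V → ℝ) (mu : V → ℝ)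
    (Ω : Finset V) (p : ℝ) (hp1 : 1 < p) (f : V → ℝ) (hsupp : ∀ x ∉ Ω, f x = 0)
    (x₀ : V) (hx₀ : f x₀ ≠ 0) (t : ℝ) (ht : 0 < t)
    (htp : t ^ (p - 1) * (∑ x ∈ Ω, mu x * |f x| ^ (p + 1)) = w0NormSq nbr w mu Ω f) :
    nehariOmega nbr w mu Ω p (fun y => t * f y) := by
  refine ⟨?_, fun x hx => by show t * f x = 0; rw [hsupp x hx]; ring, ?_⟩
  · intro h
    have := congrFun h x₀
    simp only [Pi.zero_apply] at this
    rcases mul_eq_zero.mp this with h' | h'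
    · exact ht.ne' h'
    · exact hx₀ h'
  · show w0NormSq nbr w mu Ω (fun y => t * f y) = ∑ x ∈ Ω, mu x * |t * f x| ^ (p + 1)
    rw [w0_smul, pSum_smul mu Ω p (by linarith) t ht, ← htp]
    rw [show p + 1 = 2 + (p - 1) by ring, Real.rpow_add ht, ← Real.rpow_natCast t 2]
    norm_num; ring

omit [DecidableEq V] in
lemma pInt_le_of_abs_le (mu : V → ℝ) (p : ℝ) (hp : 2 ≤ p) (v : V → ℝ) (r : ℝ)
    (hr : 0 ≤ r) (x : V) (hmux : 0 ≤ mu x) (h : |v x| ≤ r) :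
    pInt mu p v x ≤ r ^ (p - 1) * (mu x * v x ^ 2) := by
  have h1 : |v x| ^ (p + 1) = |v x| ^ (p - 1) * v x ^ 2 := by
    rw [show p + 1 = (p - 1) + 2 by ring, Real.rpow_add' (abs_nonneg _) (by linarith)]
    rw [show ((2:ℝ) = ((2:ℕ):ℝ)) by norm_num, Real.rpow_natCast, sq_abs]
  have h2 : |v x| ^ (p - 1) ≤ r ^ (p - 1) :=
    Real.rpow_le_rpow (abs_nonneg _) h (by linarith)
  calc pInt mu p v x = |v x| ^ (p - 1) * (mu x * v x ^ 2) := by rw [pInt, h1]; ring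
    _ ≤ r ^ (p - 1) * (mu x * v x ^ 2) :=
        mul_le_mul_of_nonneg_right h2 (by positivity)

omit [DecidableEq V] in
lemma pNorm_le_mul (mu : V → ℝ) (p : ℝ) (hp : 2 ≤ p) (v : V → ℝ) (r : ℝ)
    (hr : 0 ≤ r) (hmu0 : ∀ x, 0 ≤ mu x) (hvr : ∀ x, |v x| ≤ r)
    (hSp : Summable (pInt mu p v)) (hSt : Summable (fun x => mu x * v x ^ 2)) :
    pNorm mu p v ≤ r ^ (p - 1) * ∑' x, mu x * v x ^ 2 := by
  rw [pNorm, ← tsum_mul_left]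
  exact Summable.tsum_le_tsum (fun x => pInt_le_of_abs_le mu p hp v r hr x (hmu0 x) (hvr x))
    hSp (hSt.mul_left _)

omit [DecidableEq V] in
lemma tail_le (B : Finset V) (g h : V → ℝ) (hg0 : ∀ x, 0 ≤ g x) (hSg : Summable g)
    (hSh : Summable h) (hh0 : ∀ x, 0 ≤ h x) (hle : ∀ x ∉ B, g x ≤ h x) :
    ∑' x : ↑((B : Set V))ᶜ, g ↑x ≤ ∑' x, h x := by
  have h1 : ∑' x : ↑((B : Set V))ᶜ, g ↑x ≤ ∑' x : ↑((B : Set V))ᶜ, h ↑x :=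
    Summable.tsum_le_tsum (fun i => hle i (fun hmem => i.2 (Finset.mem_coe.mpr hmem))) (hSg.subtype _) (hSh.subtype _)
  have h2 := Summable.sum_add_tsum_compl (s := B) hSh
  have h3 : 0 ≤ ∑ x ∈ B, h x := Finset.sum_nonneg fun x _ => hh0 x
  linarith

/-- integrand of the W^{1,2} norm squared -/
def qqInt (nbr : V → Finset V) (w : V → V → ℝ) (mu : V → ℝ) (v : V → ℝ) (x : V) : ℝ :=
  mu x * (graphGamma nbr w mu v v x + v x ^ 2)

/-- mixed bilinear integrand -/
def bbInt (nbr : V → Finset V) (w : V → V → ℝ) (mu : V → ℝ) (f g : V → ℝ) (x : V) : ℝ :=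
  mu x * (graphGamma nbr w mu f g x + f x * g x)

omit [DecidableEq V] in
lemma eInt_decomp (nbr : V → Finset V) (w : V → V → ℝ) (mu a : V → ℝ) (lam : ℝ)
    (v : V → ℝ) (x : V) :
    eInt nbr w mu a lam v x = qqInt nbr w mu v x + lam * (mu x * (a x * v x ^ 2)) := by
  unfold eInt qqInt; ring

omit [DecidableEq V] in
lemma qqInt_eq_eInt0 (nbr : V → Finset V) (w : V → V → ℝ) (mu a : V → ℝ)
    (v : V → ℝ) (x : V) :
    qqInt nbr w mu v x = eInt nbr w mu a 0 v x := by
  unfold eInt qqInt; ring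

omit [DecidableEq V] in
lemma qqInt_sub (nbr : V → Finset V) (w : V → V → ℝ) (mu : V → ℝ) (f g : V → ℝ) (x : V) :
    qqInt nbr w mu (f - g) x
      = qqInt nbr w mu f x - 2 * bbInt nbr w mu f g x + qqInt nbr w mu g x := by
  unfold qqInt bbInt
  rw [gamma_sub]
  simp only [Pi.sub_apply]
  ring

end auxlemmas

set_option maxHeartbeats 1000000 in
/-- Main convergence theorem: as λ_k → ∞, up to a subsequence, the ground
states u_{λ_k} converge strongly in W^{1,2}(V) to a ground state u₀ of the
Dirichlet problem on the potential well Ω = {a = 0}; moreover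
λ_k∫a u_{λ_k}²dμ → 0 and ∫|∇u_{λ_k}|²dμ → ∫|∇u₀|²dμ. -/
theorem ground_state_convergence {V : Type*} [DecidableEq V]
    (nbr : V → Finset V) (w : V → V → ℝ) (mu a : V → ℝ)
    (hsym : ∀ x y, y ∈ nbr x ↔ x ∈ nbr y)
    (hconn : ∀ x y : V, Relation.ReflTransGen (fun s t => t ∈ nbr s) x y)
    (hwpos : ∀ x y, y ∈ nbr x → 0 < w x y)
    (hwsym : ∀ x y, w x y = w y x)
    (mumin : ℝ) (hmin : 0 < mumin) (hmu : ∀ x, mumin ≤ mu x)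
    (p : ℝ) (hp : 2 ≤ p)
    (ha0 : ∀ x, 0 ≤ a x)
    (Ω : Finset V) (hΩ : ∀ x, x ∈ Ω ↔ a x = 0) (hΩne : Ω.Nonempty)
    (hΩconn : ∀ x ∈ Ω, ∀ y ∈ Ω,
      Relation.ReflTransGen (fun s t => t ∈ nbr s ∧ s ∈ Ω ∧ t ∈ Ω) x y)
    (xb : V) (d : V → ℕ)
    (hballs : ∀ R : ℕ, {x : V | d x ≤ R}.Finite)
    (hainf : ∀ C : ℝ, ∃ R : ℕ, ∀ x, R < d x → C ≤ a x)
    (lam : ℕ → ℝ) (hlam1 : ∀ k, 1 < lam k) (hlam : Tendsto lam atTop atTop)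
    (u : ℕ → V → ℝ)
    (hneh : ∀ k, nehari nbr w mu a (lam k) p (u k))
    (hground : ∀ k, ∀ v : V → ℝ, nehari nbr w mu a (lam k) p v →
      Jfun nbr w mu a (lam k) p (u k) ≤ Jfun nbr w mu a (lam k) p v) :
    ∃ (φ : ℕ → ℕ) (u₀ : V → ℝ), StrictMono φ ∧
      (∀ x, x ∉ Ω → u₀ x = 0) ∧
      Tendsto (fun k => ∑' x, mu x *
          (graphGamma nbr w mu (u (φ k) - u₀) (u (φ k) - u₀) x
            + (u (φ k) x - u₀ x) ^ 2)) atTop (𝓝 0) ∧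
      nehariOmega nbr w mu Ω p u₀ ∧
      (∀ v : V → ℝ, nehariOmega nbr w mu Ω p v →
        JOmega nbr w mu Ω p u₀ ≤ JOmega nbr w mu Ω p v) ∧
      Tendsto (fun k => lam (φ k) * ∑' x, mu x * (a x * u (φ k) x ^ 2))
        atTop (𝓝 0) ∧
      Tendsto (fun k => ∑' x, mu x * graphGamma nbr w mu (u (φ k)) (u (φ k)) x)
        atTop (𝓝 (∑' x, mu x * graphGamma nbr w mu u₀ u₀ x)) := by
  classical
  have hΩa : ∀ x ∈ Ω, a x = 0 := fun x hx => (hΩ x).mp hx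
  have hp1 : (1:ℝ) < p := by linarith
  have hpne : p + 1 ≠ 0 := by linarith
  have hpm0 : (0:ℝ) < p - 1 := by linarith
  have hmupos : ∀ x, 0 < mu x := fun x => lt_of_lt_of_le hmin (hmu x)
  have hlampos : ∀ k, 0 < lam k := fun k => lt_trans one_pos (hlam1 k)
  have hΓ : ∀ (f : V → ℝ) (x : V), 0 ≤ graphGamma nbr w mu f f x :=
    fun f x => gamma_nonneg nbr w mu f x (fun y hy => (hwpos x y hy).le) (hmupos x).le
  have hc : (0:ℝ) < 1/2 - 1/(p+1) := by
    have h3 : (3:ℝ) ≤ p + 1 := by linarith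
    have := one_div_le_one_div_of_le (by norm_num : (0:ℝ) < 3) h3
    linarith
  set c : ℝ := 1/2 - 1/(p+1) with hcdef
  set F₀ : Finset V := Ω ∪ Ω.biUnion nbr with hF₀def
  have hΩF₀ : Ω ⊆ F₀ := Finset.subset_union_left
  set E : ℕ → ℝ := fun k => eNormSq nbr w mu a (lam k) (u k) with hEdef
  have hSe : ∀ k, Summable (eInt nbr w mu a (lam k) (u k)) := fun k => (hneh k).2.1.1
  have hSp : ∀ k, Summable (pInt mu p (u k)) := fun k => (hneh k).2.1.2
  have hqq0 : ∀ (v : V → ℝ) (x : V), 0 ≤ qqInt nbr w mu v x := fun v x =>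
    mul_nonneg (hmupos x).le (add_nonneg (hΓ v x) (sq_nonneg _))
  have haI0 : ∀ k (x : V), 0 ≤ lam k * (mu x * (a x * u k x ^ 2)) := fun k x =>
    mul_nonneg (hlampos k).le
      (mul_nonneg (hmupos x).le (mul_nonneg (ha0 x) (sq_nonneg _)))
  have hq_le_e : ∀ k x, qqInt nbr w mu (u k) x ≤ eInt nbr w mu a (lam k) (u k) x := by
    intro k x
    rw [eInt_decomp]
    linarith [haI0 k x]
  have heI0 : ∀ k x, 0 ≤ eInt nbr w mu a (lam k) (u k) x :=
    fun k x => le_trans (hqq0 _ x) (hq_le_e k x)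
  have ht_le_q : ∀ (v : V → ℝ) x, mu x * v x ^ 2 ≤ qqInt nbr w mu v x := by
    intro v x
    unfold qqInt
    nlinarith [mul_nonneg (hmupos x).le (hΓ v x)]
  have hSq : ∀ k, Summable (qqInt nbr w mu (u k)) := fun k =>
    Summable.of_nonneg_of_le (fun x => hqq0 _ x) (fun x => hq_le_e k x) (hSe k)
  have hSt : ∀ k, Summable (fun x => mu x * u k x ^ 2) := fun k =>
    Summable.of_nonneg_of_le (fun x => mul_nonneg (hmupos x).le (sq_nonneg _)) (fun x => ht_le_q (u k) x) (hSq k)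
  have hSla : ∀ k, Summable (fun x => lam k * (mu x * (a x * u k x ^ 2))) := by
    intro k
    have heq : (fun x => lam k * (mu x * (a x * u k x ^ 2)))
        = fun x => eInt nbr w mu a (lam k) (u k) x - qqInt nbr w mu (u k) x := by
      funext x; rw [eInt_decomp]; ring
    rw [heq]; exact (hSe k).sub (hSq k)
  have hSa : ∀ k, Summable (fun x => mu x * (a x * u k x ^ 2)) := fun k =>
    (summable_mul_left_iff (hlampos k).ne').mp (hSla k)
  set Q : ℕ → ℝ := fun k => ∑' x, qqInt nbr w mu (u k) x with hQdef
  set T : ℕ → ℝ := fun k => ∑' x, mu x * u k x ^ 2 with hTdef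
  set α : ℕ → ℝ := fun k => ∑' x, mu x * (a x * u k x ^ 2) with hαdef
  have hdecomp : ∀ k, E k = Q k + lam k * α k := by
    intro k
    show eNormSq nbr w mu a (lam k) (u k) = _
    calc eNormSq nbr w mu a (lam k) (u k)
        = ∑' x, (qqInt nbr w mu (u k) x + lam k * (mu x * (a x * u k x ^ 2))) :=
          tsum_congr fun x => eInt_decomp nbr w mu a (lam k) (u k) x
      _ = Q k + ∑' x, lam k * (mu x * (a x * u k x ^ 2)) := Summable.tsum_add (hSq k) (hSla k)
      _ = Q k + lam k * α k := by rw [tsum_mul_left]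
  have hQ0k : ∀ k, 0 ≤ Q k := fun k => tsum_nonneg fun x => hqq0 _ x
  have hα0 : ∀ k, 0 ≤ α k := fun k => tsum_nonneg fun x =>
    mul_nonneg (hmupos x).le (mul_nonneg (ha0 x) (sq_nonneg _))
  have hQleE : ∀ k, Q k ≤ E k := fun k => Summable.tsum_le_tsum (hq_le_e k) (hSq k) (hSe k)
  have hTleE : ∀ k, T k ≤ E k := fun k => Summable.tsum_le_tsum
    (fun x => le_trans (ht_le_q (u k) x) (hq_le_e k x)) (hSt k) (hSe k)
  have hJu : ∀ k, Jfun nbr w mu a (lam k) p (u k) = c * E k := by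
    intro k
    unfold Jfun
    rw [← (hneh k).2.2]
    show (1/2) * E k - (1/(p+1)) * E k = c * E k
    rw [hcdef]; ring
  have hub : ∀ v : V → ℝ, nehariOmega nbr w mu Ω p v →
      ∀ k, c * E k ≤ c * w0NormSq nbr w mu Ω v := by
    intro v hv k
    have hsupp := hv.2.1
    have hnv : nehari nbr w mu a (lam k) p v := by
      refine ⟨hv.1, ⟨summable_of_ne_finset_zero
          (eInt_support nbr w mu a (lam k) Ω hsym v hsupp),
        summable_of_ne_finset_zero (pInt_support mu p Ω v hsupp hpne)⟩, ?_⟩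
      rw [eNormSq_supported nbr w mu a (lam k) Ω hsym hΩa v hsupp,
        pNorm_supported mu p Ω v hsupp hpne]
      exact hv.2.2
    have h := hground k v hnv
    have hJv : Jfun nbr w mu a (lam k) p v = c * w0NormSq nbr w mu Ω v := by
      rw [Jfun_eq_JOmega nbr w mu a (lam k) p Ω hsym hΩa v hsupp hpne]
      unfold JOmega
      rw [← hv.2.2]
      rw [hcdef]; ring
    rw [hJu k] at h; rw [← hJv]; exact h
  obtain ⟨x₀, hx₀Ω⟩ := hΩne
  set χ : V → ℝ := fun y => if y = x₀ then (1:ℝ) else 0 with hχdef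
  have hχsupp : ∀ x ∉ Ω, χ x = 0 := fun x hx => if_neg (fun h => hx (by rw [h]; exact hx₀Ω))
  have hχx₀ : χ x₀ = 1 := if_pos rfl
  have hχP : ∑ x ∈ Ω, mu x * |χ x| ^ (p + 1) = mu x₀ := by
    rw [Finset.sum_eq_single_of_mem x₀ hx₀Ω]
    · rw [hχx₀]; simp
    · intro y _ hne
      have hy0 : χ y = 0 := if_neg hne
      rw [hy0]; simp [Real.zero_rpow hpne]
  have hχT : ∑ x ∈ Ω, mu x * χ x ^ 2 = mu x₀ := by
    rw [Finset.sum_eq_single_of_mem x₀ hx₀Ω]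
    · rw [hχx₀]; ring
    · intro y _ hne
      have hy0 : χ y = 0 := if_neg hne
      rw [hy0]; ring
  have hWχ : 0 < w0NormSq nbr w mu Ω χ := by
    have hg : 0 ≤ ∑ x ∈ Ω ∪ (Ω.biUnion nbr \ Ω), mu x * graphGamma nbr w mu χ χ x :=
      Finset.sum_nonneg fun x _ => mul_nonneg (hmupos x).le (hΓ χ x)
    unfold w0NormSq
    rw [hχT]
    have := hmupos x₀
    linarith
  set tδ : ℝ := (w0NormSq nbr w mu Ω χ / mu x₀) ^ ((1:ℝ)/(p-1)) with htδdef
  have htδpos : 0 < tδ := Real.rpow_pos_of_pos (div_pos hWχ (hmupos x₀)) _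
  have htδp : tδ ^ (p - 1) * (∑ x ∈ Ω, mu x * |χ x| ^ (p+1)) = w0NormSq nbr w mu Ω χ := by
    rw [hχP, htδdef, ← Real.rpow_mul (div_pos hWχ (hmupos x₀)).le,
      one_div_mul_cancel hpm0.ne', Real.rpow_one,
      div_mul_cancel₀ _ (hmupos x₀).ne']
  have hvδ : nehariOmega nbr w mu Ω p (fun y => tδ * χ y) :=
    nehariOmega_scale nbr w mu Ω p hp1 χ hχsupp x₀ (by rw [hχx₀]; norm_num) tδ htδpos htδp
  set M : ℝ := w0NormSq nbr w mu Ω (fun y => tδ * χ y) with hMdef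
  have hM : ∀ k, E k ≤ M := fun k => (mul_le_mul_iff_right₀ hc).mp (hub _ hvδ k)
  have habs : ∀ (y r : ℝ), 0 ≤ r → y ^ 2 ≤ r ^ 2 → |y| ≤ r := by
    intro y r hr h
    exact abs_le.mpr ⟨by nlinarith [sq_nonneg (y + r)], by nlinarith [sq_nonneg (y - r)]⟩
  have hsq : ∀ k x, mu x * u k x ^ 2 ≤ E k := fun k x =>
    le_trans (le_trans (ht_le_q (u k) x) (hq_le_e k x))
      (Summable.le_tsum (hSe k) x (fun j _ => heI0 k j))
  have hsqE : ∀ k x, u k x ^ 2 ≤ E k / mumin := by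
    intro k x
    rw [le_div_iff₀ hmin]
    calc u k x ^ 2 * mumin ≤ u k x ^ 2 * mu x := by nlinarith [sq_nonneg (u k x), hmu x]
      _ ≤ E k := by rw [mul_comm]; exact hsq k x
  have hE0 : ∀ k, 0 < E k := by
    intro k
    obtain ⟨x, hx⟩ := Function.ne_iff.mp (hneh k).1
    have hx' : u k x ≠ 0 := by simpa using hx
    have h2 : 0 < u k x ^ 2 := lt_of_le_of_ne (sq_nonneg _) (Ne.symm (pow_ne_zero 2 hx'))
    have := hsq k x
    nlinarith [hmupos x]
  have hEp : ∀ k, E k = pNorm mu p (u k) := fun k => (hneh k).2.2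
  have hEmin : ∀ k, mumin ≤ E k := by
    intro k
    by_contra hlt
    push_neg at hlt
    set s : ℝ := Real.sqrt (E k / mumin) with hsdef
    have hs0 : 0 ≤ s := Real.sqrt_nonneg _
    have hs2 : s ^ 2 = E k / mumin := Real.sq_sqrt (div_nonneg (hE0 k).le hmin.le)
    have hsabs : ∀ x, |u k x| ≤ s := fun x => habs _ _ hs0 (by rw [hs2]; exact hsqE k x)
    have hs1 : s < 1 := by
      have : s ^ 2 < 1 := by rw [hs2, div_lt_one hmin]; exact hlt
      nlinarith
    have hsp : s ^ (p - 1) < 1 := Real.rpow_lt_one hs0 hs1 hpm0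
    have hple := pNorm_le_mul mu p hp (u k) s hs0 (fun x => (hmupos x).le) hsabs
      (hSp k) (hSt k)
    rw [← hEp k] at hple
    have hTk : (∑' x, mu x * u k x ^ 2) ≤ E k := hTleE k
    have hnn : 0 ≤ s ^ (p-1) := Real.rpow_nonneg hs0 _
    have hT0 : 0 ≤ (∑' x, mu x * u k x ^ 2) := tsum_nonneg fun x => mul_nonneg (hmupos x).le (sq_nonneg _)
    nlinarith [hE0 k]
  have hMpos : 0 < M := lt_of_lt_of_le (lt_of_lt_of_le hmin (hEmin 0)) (hM 0)
  set b : ℝ := Real.sqrt (M / mumin) with hbdef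
  have hb0 : 0 < b := Real.sqrt_pos.mpr (div_pos hMpos hmin)
  have hb2 : b ^ 2 = M / mumin := Real.sq_sqrt (div_nonneg hMpos.le hmin.le)
  have hbabs : ∀ k x, |u k x| ≤ b := by
    intro k x
    refine habs _ _ hb0.le ?_
    rw [hb2]
    refine le_trans (hsqE k x) ?_
    rw [div_le_div_iff₀ hmin hmin]
    exact mul_le_mul_of_nonneg_right (hM k) hmin.le
  set bp : ℝ := b ^ (p - 1) with hbpdef
  have hbp0 : 0 < bp := Real.rpow_pos_of_pos hb0 _
  have hTlow : ∀ k, mumin / bp ≤ T k := by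
    intro k
    rw [div_le_iff₀ hbp0]
    have hple := pNorm_le_mul mu p hp (u k) b hb0.le (fun x => (hmupos x).le)
      (hbabs k) (hSp k) (hSt k)
    rw [← hEp k] at hple
    calc mumin ≤ E k := hEmin k
      _ ≤ bp * ∑' x, mu x * u k x ^ 2 := hple
      _ = T k * bp := by rw [mul_comm]
  haveI hcount : Countable V := by
    rw [← Set.countable_univ_iff]
    have hsub : (Set.univ : Set V) ⊆ ⋃ R : ℕ, {x | d x ≤ R} :=
      fun x _ => Set.mem_iUnion.mpr ⟨d x, by simp⟩
    exact (Set.countable_iUnion fun R => (hballs R).countable).mono hsub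
  obtain ⟨u₀, hu₀mem, φ, hφ, hconv⟩ :=
    (isCompact_univ_pi fun _ : V => isCompact_Icc (a := -b) (b := b)).tendsto_subseq
      (x := u) (fun k => Set.mem_univ_pi.mpr fun x =>
        ⟨(abs_le.mp (hbabs k x)).1, (abs_le.mp (hbabs k x)).2⟩)
  have hpt : ∀ x, Tendsto (fun k => u (φ k) x) atTop (𝓝 (u₀ x)) :=
    fun x => (tendsto_pi_nhds.mp hconv) x
  have hφat : Tendsto (fun k => lam (φ k)) atTop atTop := hlam.comp hφ.tendsto_atTop
  have hinv : Tendsto (fun k => (lam (φ k))⁻¹) atTop (𝓝 0) := hφat.inv_tendsto_atTop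
  have hu₀supp : ∀ x, x ∉ Ω → u₀ x = 0 := by
    intro x hx
    have hax : 0 < a x := lt_of_le_of_ne (ha0 x) (fun h => hx ((hΩ x).mpr h.symm))
    have hkey : ∀ k, u k x ^ 2 ≤ M / (lam k * (mu x * a x)) := by
      intro k
      have h2 : mu x * (a x * u k x ^ 2) ≤ α k :=
        Summable.le_tsum (hSa k) x (fun j _ =>
          mul_nonneg (hmupos j).le (mul_nonneg (ha0 j) (sq_nonneg _)))
      have h2' : lam k * (mu x * (a x * u k x ^ 2)) ≤ lam k * α k :=
        mul_le_mul_of_nonneg_left h2 (hlampos k).le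
      have h3 : Q k + lam k * α k ≤ M := by rw [← hdecomp k]; exact hM k
      have h1 : lam k * (mu x * (a x * u k x ^ 2)) ≤ M := by linarith [hQ0k k]
      rw [le_div_iff₀ (mul_pos (hlampos k) (mul_pos (hmupos x) hax))]
      calc u k x ^ 2 * (lam k * (mu x * a x))
          = lam k * (mu x * (a x * u k x ^ 2)) := by ring
        _ ≤ M := h1
    have hden : Tendsto (fun k => lam (φ k) * (mu x * a x)) atTop atTop :=
      hφat.atTop_mul_const (mul_pos (hmupos x) hax)
    have hlim0 : Tendsto (fun k => M / (lam (φ k) * (mu x * a x))) atTop (𝓝 0) :=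
      Tendsto.div_atTop tendsto_const_nhds hden
    have hsq0 : Tendsto (fun k => u (φ k) x ^ 2) atTop (𝓝 (u₀ x ^ 2)) := (hpt x).pow 2
    have hzero : u₀ x ^ 2 = 0 := by
      have h0 : Tendsto (fun k => u (φ k) x ^ 2) atTop (𝓝 0) :=
        tendsto_of_tendsto_of_tendsto_of_le_of_le tendsto_const_nhds hlim0
          (fun k => sq_nonneg _) (fun k => hkey (φ k))
      exact tendsto_nhds_unique hsq0 h0
    exact sq_eq_zero_iff.mp hzero
  obtain ⟨R₁, hR₁⟩ := hainf 1
  set B : Finset V := (hballs R₁).toFinset with hBdef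
  have hBa : ∀ x, x ∉ B → 1 ≤ a x := by
    intro x hx
    refine hR₁ x ?_
    by_contra h
    push_neg at h
    exact hx ((hballs R₁).mem_toFinset.mpr (by simpa using h))
  have hΩB : Ω ⊆ B := by
    intro x hx
    by_contra h
    have := hBa x h
    rw [hΩa x hx] at this; linarith
  have hαM : ∀ k, α k ≤ M * (lam k)⁻¹ := by
    intro k
    have h3 : Q k + lam k * α k ≤ M := by rw [← hdecomp k]; exact hM k
    have h4 : lam k * α k ≤ M := by linarith [hQ0k k]
    rw [show M * (lam k)⁻¹ = M / lam k from (div_eq_mul_inv M (lam k)).symm,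
      le_div_iff₀ (hlampos k), mul_comm]
    exact h4
  have htail_t : ∀ k, (∑' x : ↑((B : Set V))ᶜ, mu ↑x * u k (↑x) ^ 2) ≤ M * (lam k)⁻¹ := by
    intro k
    refine le_trans (tail_le B _ (fun x => mu x * (a x * u k x ^ 2))
      (fun x => mul_nonneg (hmupos x).le (sq_nonneg _)) (hSt k) (hSa k)
      (fun x => mul_nonneg (hmupos x).le (mul_nonneg (ha0 x) (sq_nonneg _))) ?_)
      (le_trans (le_of_eq rfl) (hαM k))
    intro x hx
    have h1 := hBa x hx
    have h2 : mu x * u k x ^ 2 ≤ mu x * (a x * u k x ^ 2) := by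
      nlinarith [mul_nonneg (mul_nonneg (hmupos x).le (sq_nonneg (u k x)))
        (sub_nonneg.mpr h1)]
    exact h2
  have htail_p : ∀ k, (∑' x : ↑((B : Set V))ᶜ, pInt mu p (u k) ↑x) ≤ bp * (M * (lam k)⁻¹) := by
    intro k
    have h1 : (∑' x : ↑((B : Set V))ᶜ, pInt mu p (u k) ↑x)
        ≤ ∑' x, bp * (mu x * (a x * u k x ^ 2)) := by
      refine tail_le B _ _ (fun x => mul_nonneg (hmupos x).le
        (Real.rpow_nonneg (abs_nonneg _) _)) (hSp k) ((hSa k).mul_left bp)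
        (fun x => mul_nonneg hbp0.le
          (mul_nonneg (hmupos x).le (mul_nonneg (ha0 x) (sq_nonneg _)))) ?_
      intro x hx
      have h2 : pInt mu p (u k) x ≤ bp * (mu x * u k x ^ 2) := by
        rw [hbpdef]
        exact pInt_le_of_abs_le mu p hp (u k) b hb0.le x (hmupos x).le (hbabs k x)
      have h3 := hBa x hx
      have h4 : bp * (mu x * u k x ^ 2) ≤ bp * (mu x * (a x * u k x ^ 2)) := by
        nlinarith [mul_nonneg (mul_nonneg (hmupos x).le (sq_nonneg (u k x)))
          (sub_nonneg.mpr h3), hbp0.le,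
          mul_nonneg hbp0.le (mul_nonneg (mul_nonneg (hmupos x).le (sq_nonneg (u k x)))
            (sub_nonneg.mpr h3))]
      exact le_trans h2 h4
    rw [tsum_mul_left] at h1
    exact le_trans h1 (mul_le_mul_of_nonneg_left (hαM k) hbp0.le)
  have hGcont : ∀ (F : Finset V) (g : V → (V → ℝ) → ℝ), (∀ x ∈ F, Continuous (g x)) →
      Tendsto (fun k => ∑ x ∈ F, g x (u (φ k))) atTop (𝓝 (∑ x ∈ F, g x u₀)) := by
    intro F g hg
    have hcont : Continuous fun v : V → ℝ => ∑ x ∈ F, g x v := continuous_finset_sum F hg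
    exact (hcont.tendsto u₀).comp hconv
  have hc_t : ∀ x : V, Continuous fun v : V → ℝ => mu x * v x ^ 2 :=
    fun x => continuous_const.mul ((continuous_apply x).pow 2)
  have hc_p : ∀ x : V, Continuous fun v : V → ℝ => pInt mu p v x := by
    intro x
    exact continuous_const.mul
      ((continuous_abs.comp (continuous_apply x)).rpow_const fun _ => Or.inr (by linarith))
  have hc_q : ∀ x : V, Continuous fun v : V → ℝ => qqInt nbr w mu v x := by
    intro x; unfold qqInt graphGamma; fun_prop
  have hc_b : ∀ x : V, Continuous fun v : V → ℝ => bbInt nbr w mu v u₀ x := by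
    intro x; unfold bbInt graphGamma; fun_prop
  set P₀ : ℝ := ∑ x ∈ Ω, mu x * |u₀ x| ^ (p + 1) with hP₀def
  have hPBu₀ : ∑ x ∈ B, pInt mu p u₀ x = P₀ := by
    rw [← Finset.sum_subset hΩB (fun x _ hx => pInt_support mu p Ω u₀ hu₀supp hpne x hx)]
    rfl
  have hbound : Tendsto (fun k => bp * (M * (lam (φ k))⁻¹)) atTop (𝓝 0) := by
    have h := hinv.const_mul (bp * M)
    rw [mul_zero] at h
    exact h.congr fun k => by ring
  have hPconv : Tendsto (fun k => pNorm mu p (u (φ k))) atTop (𝓝 P₀) := by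
    have hfront : Tendsto (fun k => ∑ x ∈ B, pInt mu p (u (φ k)) x) atTop
        (𝓝 (∑ x ∈ B, pInt mu p u₀ x)) := hGcont B (fun x v => pInt mu p v x) (fun x _ => hc_p x)
    have htail0 : Tendsto (fun k => ∑' x : ↑((B : Set V))ᶜ, pInt mu p (u (φ k)) ↑x)
        atTop (𝓝 0) :=
      tendsto_of_tendsto_of_tendsto_of_le_of_le tendsto_const_nhds hbound
        (fun k => tsum_nonneg fun i =>
          mul_nonneg (hmupos _).le (Real.rpow_nonneg (abs_nonneg _) _))
        (fun k => htail_p (φ k))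
    have h := hfront.add htail0
    rw [hPBu₀, add_zero] at h
    exact h.congr fun k => Summable.sum_add_tsum_compl (hSp (φ k))
  set T₀ : ℝ := ∑ x ∈ Ω, mu x * u₀ x ^ 2 with hT₀def
  have hTBu₀ : ∑ x ∈ B, mu x * u₀ x ^ 2 = T₀ := by
    rw [← Finset.sum_subset hΩB (fun x _ hx => by rw [hu₀supp x hx]; ring)]
  have hboundT : Tendsto (fun k => M * (lam (φ k))⁻¹) atTop (𝓝 0) := by
    have h := hinv.const_mul M
    rw [mul_zero] at h
    exact h
  have hTconv : Tendsto (fun k => T (φ k)) atTop (𝓝 T₀) := by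
    have hfront : Tendsto (fun k => ∑ x ∈ B, mu x * u (φ k) x ^ 2) atTop
        (𝓝 (∑ x ∈ B, mu x * u₀ x ^ 2)) := hGcont B (fun x v => mu x * v x ^ 2) (fun x _ => hc_t x)
    have htail0 : Tendsto (fun k => ∑' x : ↑((B : Set V))ᶜ, mu ↑x * u (φ k) (↑x) ^ 2)
        atTop (𝓝 0) :=
      tendsto_of_tendsto_of_tendsto_of_le_of_le tendsto_const_nhds hboundT
        (fun k => tsum_nonneg fun i => mul_nonneg (hmupos _).le (sq_nonneg _))
        (fun k => htail_t (φ k))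
    have h := hfront.add htail0
    rw [hTBu₀, add_zero] at h
    exact h.congr fun k => Summable.sum_add_tsum_compl (hSt (φ k))
  have hEconv : Tendsto (fun k => E (φ k)) atTop (𝓝 P₀) :=
    hPconv.congr fun k => (hEp (φ k)).symm
  have hqsupp : ∀ x ∉ F₀, qqInt nbr w mu u₀ x = 0 := by
    intro x hx
    rw [qqInt_eq_eInt0 nbr w mu a u₀ x]
    exact eInt_support nbr w mu a 0 Ω hsym u₀ hu₀supp x hx
  set Q₀ : ℝ := ∑' x, qqInt nbr w mu u₀ x with hQ₀def
  have hQ₀sum : Q₀ = ∑ x ∈ F₀, qqInt nbr w mu u₀ x := tsum_eq_sum hqsupp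
  have hSqu₀ : Summable (qqInt nbr w mu u₀) := summable_of_ne_finset_zero hqsupp
  have hStu₀ : Summable (fun x => mu x * u₀ x ^ 2) :=
    summable_of_ne_finset_zero (s := Ω) (fun x hx => by rw [hu₀supp x hx]; ring)
  have hW0 : w0NormSq nbr w mu Ω u₀ = Q₀ := by
    rw [hQ₀def,
      show (∑' x, qqInt nbr w mu u₀ x) = eNormSq nbr w mu a 0 u₀ from
        tsum_congr fun x => qqInt_eq_eInt0 nbr w mu a u₀ x]
    exact (eNormSq_supported nbr w mu a 0 Ω hsym hΩa u₀ hu₀supp).symm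
  have hQfront : Tendsto (fun k => ∑ x ∈ F₀, qqInt nbr w mu (u (φ k)) x) atTop (𝓝 Q₀) := by
    rw [hQ₀sum]
    exact hGcont F₀ (fun x v => qqInt nbr w mu v x) (fun x _ => hc_q x)
  have hQle : ∀ k, ∑ x ∈ F₀, qqInt nbr w mu (u k) x ≤ Q k := fun k =>
    Summable.sum_le_tsum F₀ (fun x _ => hqq0 _ x) (hSq k)
  have hQ₀P₀ : Q₀ ≤ P₀ :=
    le_of_tendsto_of_tendsto' hQfront hEconv
      (fun k => le_trans (hQle (φ k)) (hQleE (φ k)))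
  have hT₀low : mumin / bp ≤ T₀ :=
    ge_of_tendsto hTconv (Filter.Eventually.of_forall fun k => hTlow (φ k))
  have hT₀0 : 0 < T₀ := lt_of_lt_of_le (div_pos hmin hbp0) hT₀low
  have hu₀ne : u₀ ≠ 0 := by
    intro h
    have hzz : T₀ = 0 := by rw [hT₀def, h]; simp
    rw [hzz] at hT₀0
    exact lt_irrefl 0 hT₀0
  have hT₀tsum : (∑' x, mu x * u₀ x ^ 2) = T₀ :=
    tsum_eq_sum (s := Ω) (fun x hx => by rw [hu₀supp x hx]; ring)
  have hQ₀T₀ : T₀ ≤ Q₀ := by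
    rw [← hT₀tsum, hQ₀def]
    exact Summable.tsum_le_tsum (fun x => ht_le_q u₀ x) hStu₀ hSqu₀
  have hQ₀pos : 0 < Q₀ := lt_of_lt_of_le hT₀0 hQ₀T₀
  have hQP : Q₀ = P₀ := by
    rcases eq_or_lt_of_le hQ₀P₀ with h | h
    · exact h
    · exfalso
      have hP₀pos : 0 < P₀ := lt_trans hQ₀pos h
      set t : ℝ := (Q₀ / P₀) ^ ((1:ℝ)/(p-1)) with htdef
      have ht0 : 0 < t := Real.rpow_pos_of_pos (div_pos hQ₀pos hP₀pos) _
      have htp : t ^ (p-1) * (∑ x ∈ Ω, mu x * |u₀ x| ^ (p+1))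
          = w0NormSq nbr w mu Ω u₀ := by
        rw [hW0, ← hP₀def, htdef, ← Real.rpow_mul (div_pos hQ₀pos hP₀pos).le,
          one_div_mul_cancel hpm0.ne', Real.rpow_one, div_mul_cancel₀ _ hP₀pos.ne']
      obtain ⟨x₁, hx₁⟩ := Function.ne_iff.mp hu₀ne
      have hx₁' : u₀ x₁ ≠ 0 := by simpa using hx₁
      have hscale := nehariOmega_scale nbr w mu Ω p hp1 u₀ hu₀supp x₁ hx₁' t ht0 htp
      have hWs : w0NormSq nbr w mu Ω (fun y => t * u₀ y) = t^2 * Q₀ := by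
        rw [w0_smul, hW0]
      have h1 : ∀ k, c * E (φ k) ≤ c * (t^2 * Q₀) := fun k => by
        rw [← hWs]; exact hub _ hscale (φ k)
      have hlim : c * P₀ ≤ c * (t^2 * Q₀) :=
        le_of_tendsto (hEconv.const_mul c) (Filter.Eventually.of_forall h1)
      have ht1 : t < 1 := Real.rpow_lt_one (div_nonneg hQ₀pos.le hP₀pos.le)
        ((div_lt_one hP₀pos).mpr h) (one_div_pos.mpr hpm0)
      have ht2 : t^2 < 1 := pow_lt_one₀ ht0.le ht1 two_ne_zero
      have h5 : c * (t^2 * Q₀) < c * Q₀ :=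
        mul_lt_mul_of_pos_left (mul_lt_of_lt_one_left hQ₀pos ht2) hc
      have h6 : c * Q₀ < c * P₀ := mul_lt_mul_of_pos_left h hc
      linarith
  have hN : nehariOmega nbr w mu Ω p u₀ := by
    refine ⟨hu₀ne, hu₀supp, ?_⟩
    rw [hW0, hQP]
  have hEconvQ : Tendsto (fun k => E (φ k)) atTop (𝓝 Q₀) := by rw [hQP]; exact hEconv
  have hQconv : Tendsto (fun k => Q (φ k)) atTop (𝓝 Q₀) :=
    tendsto_of_tendsto_of_tendsto_of_le_of_le hQfront hEconvQ
      (fun k => hQle (φ k)) (fun k => hQleE (φ k))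
  -- summability for bbInt
  have hbsupp : ∀ k, ∀ x ∉ F₀, bbInt nbr w mu (u k) u₀ x = 0 := by
    intro k x hx
    have h1 := gamma_zero_of nbr w mu Ω hsym (u k) u₀ hu₀supp x hx
    have h2 : u₀ x = 0 := hu₀supp x (fun hh => hx (hΩF₀ hh))
    unfold bbInt; rw [h1, h2]; ring
  set Bq : ℕ → ℝ := fun k => ∑' x, bbInt nbr w mu (u k) u₀ x with hBqdef
  have hBqsum : ∀ k, Bq k = ∑ x ∈ F₀, bbInt nbr w mu (u k) u₀ x :=
    fun k => tsum_eq_sum (hbsupp k)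
  have hBu₀ : ∑ x ∈ F₀, bbInt nbr w mu u₀ u₀ x = Q₀ := by
    rw [hQ₀sum]
    exact Finset.sum_congr rfl fun x _ => by unfold bbInt qqInt; ring
  have hBconv : Tendsto (fun k => Bq (φ k)) atTop (𝓝 Q₀) := by
    have h := hGcont F₀ (fun x v => bbInt nbr w mu v u₀ x) (fun x _ => hc_b x)
    rw [hBu₀] at h
    exact h.congr fun k => (hBqsum (φ k)).symm
  have hdiff : ∀ k, (∑' x, qqInt nbr w mu (u k - u₀) x) = Q k - 2 * Bq k + Q₀ := by
    intro k
    have h1 : ∀ x, qqInt nbr w mu (u k - u₀) x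
        = (qqInt nbr w mu (u k) x - 2 * bbInt nbr w mu (u k) u₀ x)
          + qqInt nbr w mu u₀ x := fun x => by rw [qqInt_sub]
    have hSb : Summable (fun x => 2 * bbInt nbr w mu (u k) u₀ x) :=
      (summable_of_ne_finset_zero (hbsupp k)).mul_left 2
    rw [tsum_congr h1, Summable.tsum_add ((hSq k).sub hSb) hSqu₀, Summable.tsum_sub (hSq k) hSb,
      tsum_mul_left]
  refine ⟨φ, u₀, hφ, hu₀supp, ?_, hN, ?_, ?_, ?_⟩
  · -- W^{1,2} difference tends to zero
    show Tendsto (fun k => ∑' x, qqInt nbr w mu (u (φ k) - u₀) x) atTop (𝓝 0)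
    have hfin := (hQconv.sub (hBconv.const_mul 2)).add_const Q₀
    have hval : (Q₀ - 2 * Q₀) + Q₀ = 0 := by ring
    rw [hval] at hfin
    exact hfin.congr fun k => (hdiff (φ k)).symm
  · -- ground state minimality
    intro v hv
    have h1 : ∀ k, c * E (φ k) ≤ c * w0NormSq nbr w mu Ω v := fun k => hub v hv (φ k)
    have h2 : c * P₀ ≤ c * w0NormSq nbr w mu Ω v :=
      le_of_tendsto (hEconv.const_mul c) (Filter.Eventually.of_forall h1)
    have hJ0 : JOmega nbr w mu Ω p u₀ = c * P₀ := by
      unfold JOmega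
      rw [← hN.2.2, hW0, hQP, hcdef]; ring
    have hJv : JOmega nbr w mu Ω p v = c * w0NormSq nbr w mu Ω v := by
      unfold JOmega
      rw [← hv.2.2, hcdef]; ring
    rw [hJ0, hJv]
    exact h2
  · -- lambda term tends to zero
    have h := hEconv.sub hQconv
    rw [hQP, sub_self] at h
    refine h.congr fun k => ?_
    show E (φ k) - Q (φ k) = lam (φ k) * α (φ k)
    rw [hdecomp (φ k)]; ring
  · -- gradient convergence
    have hgdecomp : ∀ (vv : V → ℝ), Summable (qqInt nbr w mu vv) →
        Summable (fun x => mu x * vv x ^ 2) →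
        (∑' x, mu x * graphGamma nbr w mu vv vv x)
          = (∑' x, qqInt nbr w mu vv x) - ∑' x, mu x * vv x ^ 2 := by
      intro vv h1 h2
      rw [← Summable.tsum_sub h1 h2]
      exact tsum_congr fun x => by unfold qqInt; ring
    have hright : (∑' x, mu x * graphGamma nbr w mu u₀ u₀ x) = Q₀ - T₀ := by
      rw [hgdecomp u₀ hSqu₀ hStu₀, hT₀tsum, hQ₀def]
    rw [hright]
    have h := hQconv.sub hTconv
    exact h.congr fun k => (hgdecomp (u (φ k)) (hSq (φ k)) (hSt (φ k))).symm
end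
end
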